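/- arXiv:1801.05195 — 5 statements merged into one kernel-verified Lean document; each statement's English description precedes it below -/
import Mathlib

section
/- Existence of the entropy density: If P is an order-hereditary property of k-colourings with P_n ≠ ∅ for every n ∈ ℕ, then the sequence (ex(n,P)/C(n,2))_{n≥2} is nonincreasing and tends to a limit π(P) ∈ [0,1] as n → ∞. -/
open Filter

abbrev Edge (n : ℕ) := {p : Fin n × Fin n // p.1 < p.2}

abbrev Colouring (k n : ℕ) := Edge n → Fin k

abbrev Template (k n : ℕ) := Edge n → Finset (Fin k)

def Proper {k n : ℕ} (t : Template k n) : Prop := ∀ e, (t e).Nonempty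

def Realises {k n : ℕ} (c : Colouring k n) (t : Template k n) : Prop := ∀ e, c e ∈ t e

noncomputable def Ent {k n : ℕ} (t : Template k n) : ℝ :=
  ∑ e : Edge n, Real.logb k ((t e).card)

def Edge.map {m n : ℕ} (φ : Fin m → Fin n) (h : StrictMono φ) (e : Edge m) : Edge n :=
  ⟨(φ e.1.1, φ e.1.2), h e.2⟩

def restrictC {k m n : ℕ} (c : Colouring k n) (φ : Fin m → Fin n) (h : StrictMono φ) :
    Colouring k m := fun e => c (Edge.map φ h e)

def restrictT {k m n : ℕ} (t : Template k n) (φ : Fin m → Fin n) (h : StrictMono φ) :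
    Template k m := fun e => t (Edge.map φ h e)

def Forb {k N : ℕ} (F : Set (Colouring k N)) (n : ℕ) : Set (Colouring k n) :=
  {c | ∀ (φ : Fin N → Fin n) (h : StrictMono φ), restrictC c φ h ∉ F}

def OrderHereditary {k : ℕ} (P : ∀ n, Set (Colouring k n)) : Prop :=
  ∀ (m n : ℕ) (φ : Fin m → Fin n) (h : StrictMono φ) (c : Colouring k n),
    c ∈ P n → restrictC c φ h ∈ P m

noncomputable def exEnt {k n : ℕ} (A : Set (Colouring k n)) : ℝ :=
  sSup {x | ∃ t : Template k n, Proper t ∧ (∀ c, Realises c t → c ∈ A) ∧ Ent t = x}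

noncomputable def badPairs {k N n : ℕ} (t : Template k n) (F : Set (Colouring k N)) : ℕ :=
  Set.ncard {p : (Fin N → Fin n) × Colouring k N |
    ∃ h : StrictMono p.1, p.2 ∈ F ∧ Realises p.2 (restrictT t p.1 h)}

def TemplateLE {k m n : ℕ} (t : Template k m) (t' : Template k n) : Prop :=
  ∃ (φ : Fin m → Fin n) (h : StrictMono φ), ∀ e, t e ⊆ restrictT t' φ h e

def IsContainerFamily {k n : ℕ} (T : Finset (Template k n)) (A : Set (Colouring k n)) : Prop :=
  ∀ t : Template k n, Proper t → (∀ c, Realises c t → c ∈ A) → ∃ t' ∈ T, TemplateLE t t'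

-- card lemma
def edgeEquiv (n : ℕ) : Edge n ≃ Σ j : Fin n, Fin j.1 where
  toFun e := ⟨e.1.2, ⟨e.1.1.1, e.2⟩⟩
  invFun x := ⟨(⟨x.2.1, lt_trans x.2.2 x.1.2⟩, x.1), x.2.2⟩
  left_inv e := by
    apply Subtype.ext; apply Prod.ext <;> simp
  right_inv x := by
    cases x; simp

lemma card_edge (n : ℕ) : Fintype.card (Edge n) = n.choose 2 := by
  rw [Fintype.card_congr (edgeEquiv n), Fintype.card_sigma]
  simp only [Fintype.card_fin]
  rw [Fin.sum_univ_eq_sum_range (fun j => j) n, Finset.sum_range_id, Nat.choose_two_right]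

lemma edgeMap_injective {m n : ℕ} (φ : Fin m → Fin n) (h : StrictMono φ) :
    Function.Injective (Edge.map φ h) := by
  intro e f hef
  have h1 : (φ e.1.1, φ e.1.2) = (φ f.1.1, φ f.1.2) := congrArg Subtype.val hef
  rw [Prod.mk.injEq] at h1
  exact Subtype.ext (Prod.ext (h.injective h1.1) (h.injective h1.2))

lemma sum_succAbove_eq {n : ℕ} (g : Edge (n+1) → ℝ) (i : Fin (n+1)) :
    ∑ f : Edge n, g (Edge.map i.succAbove (Fin.strictMono_succAbove i) f)
    = ∑ e ∈ Finset.univ.filter (fun e : Edge (n+1) => ¬(i = e.1.1 ∨ i = e.1.2)), g e := by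
  apply Finset.sum_bij (fun f _ => Edge.map i.succAbove (Fin.strictMono_succAbove i) f)
  · intro f _
    simp only [Finset.mem_filter, Finset.mem_univ, true_and, not_or]
    exact ⟨(Fin.succAbove_ne i f.1.1).symm, (Fin.succAbove_ne i f.1.2).symm⟩
  · intro a _ b _ hab
    exact edgeMap_injective _ _ hab
  · intro e he
    simp only [Finset.mem_filter, Finset.mem_univ, true_and, not_or] at he
    obtain ⟨a, ha⟩ := Fin.exists_succAbove_eq (Ne.symm he.1)
    obtain ⟨b, hb⟩ := Fin.exists_succAbove_eq (Ne.symm he.2)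
    have hlt : a < b := by
      rw [← Fin.succAbove_lt_succAbove_iff (p := i)]
      rw [ha, hb]; exact e.2
    refine ⟨⟨(a, b), hlt⟩, Finset.mem_univ _, ?_⟩
    exact Subtype.ext (Prod.ext ha hb)
  · intro f _; rfl

lemma sum_Ent_succAbove {k n : ℕ} (t : Template k (n+1)) :
    ∑ i : Fin (n+1), Ent (restrictT t (Fin.succAbove i) (Fin.strictMono_succAbove i))
    = ((n - 1 : ℕ) : ℝ) * Ent t := by
  set g : Edge (n+1) → ℝ := fun e => Real.logb k ((t e).card) with hg
  have h1 : ∑ i : Fin (n+1), Ent (restrictT t (Fin.succAbove i) (Fin.strictMono_succAbove i))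
      = ∑ i : Fin (n+1), ∑ e ∈ Finset.univ.filter
          (fun e : Edge (n+1) => ¬(i = e.1.1 ∨ i = e.1.2)), g e :=
    Finset.sum_congr rfl fun i _ => sum_succAbove_eq g i
  rw [h1]
  simp only [Finset.sum_filter]
  rw [Finset.sum_comm]
  have h2 : Ent t = ∑ e : Edge (n+1), g e := rfl
  rw [h2, Finset.mul_sum]
  refine Finset.sum_congr rfl fun e _ => ?_
  rw [Finset.sum_ite, Finset.sum_const_zero, add_zero, Finset.sum_const, nsmul_eq_mul]
  have h3 : Finset.univ.filter (fun i : Fin (n+1) => i = e.1.1 ∨ i = e.1.2)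
      = {e.1.1, e.1.2} := by
    ext i; simp
  have hcard : (Finset.univ.filter fun i : Fin (n+1) => ¬(i = e.1.1 ∨ i = e.1.2)).card
      = n - 1 := by
    rw [Finset.filter_not, Finset.card_sdiff_of_subset (Finset.filter_subset _ _), h3,
      Finset.card_insert_of_notMem (by simp [ne_of_lt e.2]), Finset.card_singleton,
      Finset.card_univ, Fintype.card_fin]
    omega
  rw [hcard]

lemma exists_extension {k m n : ℕ} (t : Template k n) (ht : Proper t)
    (φ : Fin m → Fin n) (h : StrictMono φ) (c : Colouring k m)
    (hc : Realises c (restrictT t φ h)) :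
    ∃ c' : Colouring k n, Realises c' t ∧ restrictC c' φ h = c := by
  classical
  refine ⟨fun e => if he : ∃ f, Edge.map φ h f = e then c he.choose else (ht e).choose, ?_, ?_⟩
  · intro e
    by_cases he : ∃ f, Edge.map φ h f = e
    · simp only [dif_pos he]
      have h1 : c he.choose ∈ t (Edge.map φ h he.choose) := hc he.choose
      rwa [he.choose_spec] at h1
    · simp only [dif_neg he]; exact (ht e).choose_spec
  · funext f
    have he : ∃ f', Edge.map φ h f' = Edge.map φ h f := ⟨f, rfl⟩
    show (if he' : ∃ f', Edge.map φ h f' = Edge.map φ h f then c he'.choose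
      else (ht _).choose) = c f
    rw [dif_pos he]
    congr 1
    exact edgeMap_injective φ h he.choose_spec

lemma ent_le_choose {k n : ℕ} (hk : 2 ≤ k) (t : Template k n) :
    Ent t ≤ (n.choose 2 : ℝ) := by
  have hb : (1 : ℝ) < k := by exact_mod_cast hk.trans_lt' one_lt_two
  calc Ent t ≤ ∑ _e : Edge n, (1 : ℝ) := by
        refine Finset.sum_le_sum fun e _ => ?_
        rcases Nat.eq_zero_or_pos (t e).card with h0 | h0
        · rw [h0]; simp
        · have h1 : ((t e).card : ℝ) ≤ (k : ℝ) := by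
            exact_mod_cast (Finset.card_le_univ _).trans_eq (by simp)
          calc Real.logb k ((t e).card) ≤ Real.logb k k :=
                Real.logb_le_logb_of_le hb (by exact_mod_cast h0) h1
            _ = 1 := Real.logb_self_eq_one hb
    _ = (n.choose 2 : ℝ) := by
        rw [Finset.sum_const, Finset.card_univ, card_edge, nsmul_eq_mul, mul_one]

lemma zero_mem_set {k n : ℕ} (A : Set (Colouring k n)) (hA : A.Nonempty) :
    (0 : ℝ) ∈ {x | ∃ t : Template k n, Proper t ∧ (∀ c, Realises c t → c ∈ A) ∧ Ent t = x} := by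
  obtain ⟨c₀, hc₀⟩ := hA
  refine ⟨fun e => {c₀ e}, fun e => Finset.singleton_nonempty _, fun c hc => ?_, ?_⟩
  · have : c = c₀ := funext fun e => Finset.mem_singleton.mp (hc e)
    rwa [this]
  · simp [Ent]

lemma bddAbove_set {k n : ℕ} (hk : 2 ≤ k) (A : Set (Colouring k n)) :
    BddAbove {x | ∃ t : Template k n, Proper t ∧ (∀ c, Realises c t → c ∈ A) ∧ Ent t = x} :=
  ⟨(n.choose 2 : ℝ), fun _x ⟨t, _, _, hx⟩ => hx ▸ ent_le_choose hk t⟩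

lemma exEnt_nonneg' {k n : ℕ} (hk : 2 ≤ k) (A : Set (Colouring k n)) (hA : A.Nonempty) :
    0 ≤ sSup {x | ∃ t : Template k n, Proper t ∧ (∀ c, Realises c t → c ∈ A) ∧ Ent t = x} :=
  le_csSup (bddAbove_set hk A) (zero_mem_set A hA)

lemma exEnt_le_choose' {k n : ℕ} (hk : 2 ≤ k) (A : Set (Colouring k n)) (hA : A.Nonempty) :
    sSup {x | ∃ t : Template k n, Proper t ∧ (∀ c, Realises c t → c ∈ A) ∧ Ent t = x}
      ≤ (n.choose 2 : ℝ) :=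
  csSup_le ⟨0, zero_mem_set A hA⟩ fun _x ⟨t, _, _, hx⟩ => hx ▸ ent_le_choose hk t


section main
variable {k : ℕ} (hk : 2 ≤ k) (P : ∀ n, Set (Colouring k n))
  (hP : OrderHereditary P) (hne : ∀ n, (P n).Nonempty)

include hk hP hne

lemma step_ineq (n : ℕ) (hn : 2 ≤ n) :
    exEnt (P (n+1)) / ((n+1).choose 2 : ℝ) ≤ exEnt (P n) / (n.choose 2 : ℝ) := by
  have hn1 : (0 : ℝ) < (n : ℝ) - 1 := by
    have : (2 : ℝ) ≤ (n : ℝ) := by exact_mod_cast hn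
    linarith
  have hncast : ((n - 1 : ℕ) : ℝ) = (n : ℝ) - 1 := by
    rw [Nat.cast_sub (by omega)]; norm_num
  have key : exEnt (P (n+1)) ≤ ((n : ℝ) + 1) / ((n : ℝ) - 1) * exEnt (P n) := by
    apply csSup_le ⟨0, zero_mem_set _ (hne (n+1))⟩
    rintro x ⟨t, ht, hA, rfl⟩
    have hsum := sum_Ent_succAbove t
    have heach : ∀ i : Fin (n+1),
        Ent (restrictT t (Fin.succAbove i) (Fin.strictMono_succAbove i)) ≤ exEnt (P n) := by
      intro i
      apply le_csSup (bddAbove_set hk (P n))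
      refine ⟨restrictT t (Fin.succAbove i) (Fin.strictMono_succAbove i),
        fun e => ht _, fun c hc => ?_, rfl⟩
      obtain ⟨c', hc', rfl⟩ := exists_extension t ht _ (Fin.strictMono_succAbove i) c hc
      exact hP n (n+1) _ _ c' (hA c' hc')
    have hle : ((n : ℝ) - 1) * Ent t ≤ ((n : ℝ) + 1) * exEnt (P n) := by
      rw [← hncast, ← hsum]
      calc ∑ i : Fin (n+1), Ent (restrictT t (Fin.succAbove i) (Fin.strictMono_succAbove i))
          ≤ ∑ _i : Fin (n+1), exEnt (P n) := Finset.sum_le_sum fun i _ => heach i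
        _ = ((n : ℝ) + 1) * exEnt (P n) := by
            rw [Finset.sum_const, Finset.card_univ, Fintype.card_fin, nsmul_eq_mul]
            push_cast; ring
    rw [div_mul_eq_mul_div, le_div_iff₀ hn1, mul_comm]
    exact hle
  have hchoose1 : ((n.choose 2 : ℕ) : ℝ) = (n : ℝ) * ((n : ℝ) - 1) / 2 := by
    rw [Nat.cast_choose_two]
  have hchoose2 : (((n+1).choose 2 : ℕ) : ℝ) = ((n : ℝ) + 1) * (n : ℝ) / 2 := by
    rw [Nat.cast_choose_two]; push_cast; ring_nf
  have hpos1 : (0 : ℝ) < ((n.choose 2 : ℕ) : ℝ) := by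
    exact_mod_cast Nat.choose_pos hn
  have hpos2 : (0 : ℝ) < (((n+1).choose 2 : ℕ) : ℝ) := by
    exact_mod_cast Nat.choose_pos (by omega : 2 ≤ n + 1)
  calc exEnt (P (n+1)) / (((n+1).choose 2 : ℕ) : ℝ)
      ≤ (((n : ℝ) + 1) / ((n : ℝ) - 1) * exEnt (P n)) / (((n+1).choose 2 : ℕ) : ℝ) := by
        gcongr
    _ = exEnt (P n) / ((n.choose 2 : ℕ) : ℝ) := by
        rw [hchoose1, hchoose2]
        field_simp

lemma mono_ineq : ∀ m n : ℕ, 2 ≤ m → m ≤ n →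
    exEnt (P n) / (n.choose 2 : ℝ) ≤ exEnt (P m) / (m.choose 2 : ℝ) := by
  intro m n hm hmn
  induction n, hmn using Nat.le_induction with
  | base => exact le_refl _
  | succ n hmn ih =>
    exact (step_ineq hk P hP hne n (hm.trans hmn)).trans ih

theorem entropy_density_exists' :
    ∃ π : ℝ, π ∈ Set.Icc (0 : ℝ) 1 ∧
      (∀ m n : ℕ, 2 ≤ m → m ≤ n →
        exEnt (P n) / (n.choose 2 : ℝ) ≤ exEnt (P m) / (m.choose 2 : ℝ)) ∧
      Tendsto (fun n => exEnt (P n) / (n.choose 2 : ℝ)) atTop (nhds π) := by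
  set a : ℕ → ℝ := fun n => exEnt (P n) / (n.choose 2 : ℝ) with ha
  have hmono := mono_ineq hk P hP hne
  have h0 : ∀ n : ℕ, 0 ≤ a n := fun n =>
    div_nonneg (exEnt_nonneg' hk (P n) (hne n)) (Nat.cast_nonneg _)
  have h1 : ∀ n : ℕ, 2 ≤ n → a n ≤ 1 := by
    intro n hn
    have hpos : (0 : ℝ) < ((n.choose 2 : ℕ) : ℝ) := by
      exact_mod_cast Nat.choose_pos hn
    rw [ha]
    exact div_le_one_of_le₀ (exEnt_le_choose' hk (P n) (hne n)) hpos.le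
  set b : ℕ → ℝ := fun j => a (j + 2) with hb
  have hanti : Antitone b := fun i j hij => hmono (i + 2) (j + 2) (by omega) (by omega)
  have hbdd : BddBelow (Set.range b) := ⟨0, by rintro x ⟨j, rfl⟩; exact h0 _⟩
  have htend : Tendsto b atTop (nhds (⨅ j, b j)) := tendsto_atTop_ciInf hanti hbdd
  refine ⟨⨅ j, b j, ⟨?_, ?_⟩, hmono, ?_⟩
  · exact le_ciInf fun j => h0 _
  · exact (ciInf_le hbdd 0).trans (h1 2 le_rfl)
  · exact (tendsto_add_atTop_iff_nat 2).mp htend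
end main

/-- Existence of the entropy density (Proposition 2.11). -/
theorem entropy_density_exists (k : ℕ) (hk : 2 ≤ k)
    (P : ∀ n, Set (Colouring k n)) (hP : OrderHereditary P)
    (hne : ∀ n, (P n).Nonempty) :
    ∃ π : ℝ, π ∈ Set.Icc (0 : ℝ) 1 ∧
      (∀ m n : ℕ, 2 ≤ m → m ≤ n →
        exEnt (P n) / (n.choose 2 : ℝ) ≤ exEnt (P m) / (m.choose 2 : ℝ)) ∧
      Tendsto (fun n => exEnt (P n) / (n.choose 2 : ℝ)) atTop (nhds π) :=
  entropy_density_exists' hk P hP hne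
end

section
/- Approximation of general order-hereditary properties: Let k ≥ 2 and let P be an order-hereditary property of k-colourings with P_n ≠ ∅ for every n ∈ ℕ, and let ε > 0. There exist N, n₀ ∈ ℕ and a family F of k-colourings of K_N such that for all n ≥ n₀: (i) P_n ⊆ Forb(F)_n, and (ii) |Forb(F)_n| ≤ |P_n| · k^{ε·C(n,2)}. -/
open Filter

set_option maxHeartbeats 1000000

namespace ShearerAux

open Finset

/-- Jensen / AM-GM for logs. -/
lemma sum_log_le {α : Type*} (s : Finset α) (hs : s.Nonempty) (p : α → ℝ)
    (hp : ∀ a ∈ s, 0 < p a) :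
    ∑ a ∈ s, Real.log (p a) ≤ s.card * Real.log ((∑ a ∈ s, p a) / s.card) := by
  have hc : (0:ℝ) < s.card := by exact_mod_cast Finset.card_pos.2 hs
  have hw : ∑ _a ∈ s, (1:ℝ)/s.card = 1 := by
    rw [Finset.sum_const, nsmul_eq_mul]; field_simp
  have hgm := Real.geom_mean_le_arith_mean_weighted s (fun _ => 1/s.card) p
    (fun i _ => by positivity) hw (fun i hi => (hp i hi).le)
  have hprodpos : 0 < ∏ a ∈ s, p a ^ ((1:ℝ)/s.card) :=
    Finset.prod_pos fun a ha => Real.rpow_pos_of_pos (hp a ha) _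
  have hlog : Real.log (∏ a ∈ s, p a ^ ((1:ℝ)/s.card))
      = (1/s.card) * ∑ a ∈ s, Real.log (p a) := by
    rw [Real.log_prod (fun a ha => (Real.rpow_pos_of_pos (hp a ha) _).ne'),
      Finset.mul_sum]
    exact Finset.sum_congr rfl fun a ha => Real.log_rpow (hp a ha) _
  have hsum : ∑ i ∈ s, (1:ℝ)/s.card * p i = (∑ a ∈ s, p a) / s.card := by
    rw [Finset.sum_div]; exact Finset.sum_congr rfl fun a _ => by ring
  have h2 : Real.log (∏ a ∈ s, p a ^ ((1:ℝ)/s.card))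
      ≤ Real.log ((∑ a ∈ s, p a) / s.card) :=
    Real.log_le_log hprodpos (hgm.trans_eq hsum)
  rw [hlog] at h2
  have := mul_le_mul_of_nonneg_left h2 hc.le
  calc ∑ a ∈ s, Real.log (p a)
      = (s.card : ℝ) * ((1/s.card) * ∑ a ∈ s, Real.log (p a)) := by field_simp
    _ ≤ s.card * Real.log ((∑ a ∈ s, p a) / s.card) := this


section Classes

variable {k m : ℕ}

/-- The set of elements of `A` agreeing with `a` on `S`. -/
def cls (A : Finset (Colouring k m)) (S : Finset (Edge m)) (a : Colouring k m) :
    Finset (Colouring k m) :=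
  A.filter (fun b => ∀ e ∈ S, b e = a e)

def NN (A : Finset (Colouring k m)) (S : Finset (Edge m)) (a : Colouring k m) : ℕ :=
  (cls A S a).card

noncomputable def JJ (A : Finset (Colouring k m)) (S : Finset (Edge m)) : ℝ :=
  ∑ a ∈ A, Real.log (NN A S a)

variable {A : Finset (Colouring k m)} {S T : Finset (Edge m)} {a b : Colouring k m}

lemma mem_cls : b ∈ cls A S a ↔ b ∈ A ∧ ∀ e ∈ S, b e = a e := Finset.mem_filter

lemma self_mem_cls (ha : a ∈ A) : a ∈ cls A S a := mem_cls.2 ⟨ha, fun _ _ => rfl⟩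

lemma NN_pos (ha : a ∈ A) : 0 < NN A S a := Finset.card_pos.2 ⟨a, self_mem_cls ha⟩

lemma cls_eq_of_mem (hb : b ∈ cls A S a) : cls A S b = cls A S a := by
  obtain ⟨hbA, hag⟩ := mem_cls.1 hb
  ext x
  simp only [mem_cls]
  exact ⟨fun ⟨hx, h⟩ => ⟨hx, fun e he => (h e he).trans (hag e he)⟩,
    fun ⟨hx, h⟩ => ⟨hx, fun e he => (h e he).trans (hag e he).symm⟩⟩

lemma cls_anti (h : S ⊆ T) : cls A T a ⊆ cls A S a := fun b hb =>
  mem_cls.2 ⟨(mem_cls.1 hb).1, fun e he => (mem_cls.1 hb).2 e (h he)⟩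

lemma NN_anti (h : S ⊆ T) : NN A T a ≤ NN A S a := Finset.card_le_card (cls_anti h)

lemma NN_univ (ha : a ∈ A) : NN A Finset.univ a = 1 := by
  rw [NN, Finset.card_eq_one]
  exact ⟨a, by
    ext b
    simp only [mem_cls, Finset.mem_univ, true_implies, Finset.mem_singleton]
    exact ⟨fun ⟨_, h⟩ => funext h, fun h => by subst h; exact ⟨ha, fun _ => rfl⟩⟩⟩

lemma NN_empty : NN A ∅ a = A.card := by
  rw [NN, cls]
  simp

lemma JJ_univ : JJ A Finset.univ = 0 := by
  rw [JJ]
  refine Finset.sum_eq_zero fun a ha => ?_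
  rw [NN_univ ha]; simp

lemma JJ_empty : JJ A ∅ = A.card * Real.log A.card := by
  rw [JJ]
  rw [Finset.sum_congr rfl (fun a _ => by rw [NN_empty])]
  rw [Finset.sum_const, nsmul_eq_mul]

lemma JJ_anti (h : S ⊆ T) : JJ A T ≤ JJ A S := by
  refine Finset.sum_le_sum fun a ha => ?_
  exact Real.log_le_log (by exact_mod_cast NN_pos ha) (by exact_mod_cast NN_anti h)

/-- The key counting inequality. -/
lemma sum_ratio_le (A : Finset (Colouring k m)) (S T : Finset (Edge m)) :
    ∑ a ∈ A, (NN A S a * NN A T a : ℝ) / (NN A (S ∪ T) a * NN A (S ∩ T) a)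
      ≤ A.card := by
  classical
  -- rewrite each term as a double sum of indicators
  have step1 : ∀ a ∈ A, (NN A S a * NN A T a : ℝ) / (NN A (S ∪ T) a * NN A (S ∩ T) a)
      = ∑ b ∈ A, ∑ c ∈ A,
          (if (∀ e ∈ S, b e = a e) ∧ (∀ e ∈ T, c e = a e) then
            (1:ℝ) / (NN A (S ∪ T) a * NN A (S ∩ T) a) else 0) := by
    intro a _
    have hS : (NN A S a : ℝ) = ∑ b ∈ A, (if (∀ e ∈ S, b e = a e) then (1:ℝ) else 0) := by
      rw [NN, cls, ← Finset.sum_filter]; simp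
    have hT : (NN A T a : ℝ) = ∑ c ∈ A, (if (∀ e ∈ T, c e = a e) then (1:ℝ) else 0) := by
      rw [NN, cls, ← Finset.sum_filter]; simp
    rw [div_eq_mul_one_div, hS, hT, Finset.sum_mul_sum, Finset.sum_mul]
    refine Finset.sum_congr rfl fun b _ => ?_
    rw [Finset.sum_mul]
    refine Finset.sum_congr rfl fun c _ => ?_
    split_ifs with h1 h2 h3 <;> simp_all
  rw [Finset.sum_congr rfl step1]
  rw [Finset.sum_comm]
  -- now outer sum over b
  have step2 : ∀ b ∈ A,
      (∑ a ∈ A, ∑ c ∈ A, (if (∀ e ∈ S, b e = a e) ∧ (∀ e ∈ T, c e = a e) then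
            (1:ℝ) / (NN A (S ∪ T) a * NN A (S ∩ T) a) else 0)) ≤ 1 := by
    intro b hb
    rw [Finset.sum_comm]
    have inner : ∀ c ∈ A,
        (∑ a ∈ A, (if (∀ e ∈ S, b e = a e) ∧ (∀ e ∈ T, c e = a e) then
            (1:ℝ) / (NN A (S ∪ T) a * NN A (S ∩ T) a) else 0))
        ≤ (if c ∈ cls A (S ∩ T) b then (1:ℝ) / (NN A (S ∩ T) b) else 0) := by
      intro c hc
      set W := A.filter (fun a => (∀ e ∈ S, b e = a e) ∧ (∀ e ∈ T, c e = a e)) with hW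
      have hWmem : ∀ a, a ∈ W ↔ a ∈ A ∧ ((∀ e ∈ S, b e = a e) ∧ (∀ e ∈ T, c e = a e)) := by
        intro a; rw [hW, Finset.mem_filter]
      rw [← Finset.sum_filter, ← hW]
      clear_value W
      rcases W.eq_empty_or_nonempty with hWe | hWne
      · rw [hWe, Finset.sum_empty]
        split_ifs
        · positivity
        · exact le_rfl
      · obtain ⟨a₀, ha₀⟩ := hWne
        -- facts for each a ∈ W
        have hWfacts : ∀ a ∈ W, b ∈ cls A S a ∧ W ⊆ cls A (S ∪ T) a := by
          intro a haW
          have hfa := (hWmem a).1 haW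
          refine ⟨mem_cls.2 ⟨hb, hfa.2.1⟩, fun a' ha'W => ?_⟩
          have hfa' := (hWmem a').1 ha'W
          have hSa := hfa.2.1; have hTa := hfa.2.2
          have hSa' := hfa'.2.1; have hTa' := hfa'.2.2
          refine mem_cls.2 ⟨hfa'.1, fun e he => ?_⟩
          rcases Finset.mem_union.1 he with heS | heT
          · rw [← hSa' e heS, hSa e heS]
          · rw [← hTa' e heT, hTa e heT]
        have hcmem : c ∈ cls A (S ∩ T) b := by
          obtain ⟨hbc, hWc⟩ := hWfacts a₀ ha₀
          have h1 : c ∈ cls A T a₀ := by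
            have := (hWmem a₀).1 ha₀
            exact mem_cls.2 ⟨hc, this.2.2⟩
          have h2 : c ∈ cls A (S ∩ T) a₀ := cls_anti Finset.inter_subset_right h1
          have h3 : b ∈ cls A (S ∩ T) a₀ := cls_anti Finset.inter_subset_left hbc
          rw [cls_eq_of_mem h3]
          exact h2
        rw [if_pos hcmem]
        have hM : 0 < NN A (S ∩ T) b := NN_pos hb
        have hptwise : ∀ a ∈ W, (1:ℝ) / (NN A (S ∪ T) a * NN A (S ∩ T) a)
            ≤ 1 / (W.card * NN A (S ∩ T) b) := by
          intro a haW
          obtain ⟨hbc, hWc⟩ := hWfacts a haW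
          have h1 : (W.card : ℝ) ≤ NN A (S ∪ T) a := by
            exact_mod_cast Finset.card_le_card hWc
          have h2 : NN A (S ∩ T) a = NN A (S ∩ T) b := by
            have h3 : b ∈ cls A (S ∩ T) a := cls_anti Finset.inter_subset_left hbc
            rw [NN, NN, cls_eq_of_mem h3]
          rw [h2]
          have hWpos : (0:ℝ) < W.card := by
            exact_mod_cast Finset.card_pos.2 ⟨a, haW⟩
          have hMpos : (0:ℝ) < (NN A (S ∩ T) b : ℝ) := by exact_mod_cast NN_pos hb
          apply one_div_le_one_div_of_le
          · exact mul_pos hWpos hMpos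
          · exact mul_le_mul_of_nonneg_right h1 hMpos.le
        calc ∑ a ∈ W, (1:ℝ) / (NN A (S ∪ T) a * NN A (S ∩ T) a)
            ≤ ∑ _a ∈ W, (1:ℝ) / (W.card * NN A (S ∩ T) b) :=
              Finset.sum_le_sum hptwise
          _ = W.card * ((1:ℝ) / (W.card * NN A (S ∩ T) b)) := by
              rw [Finset.sum_const, nsmul_eq_mul]
          _ = 1 / (NN A (S ∩ T) b) := by
              have hWpos : (0:ℝ) < W.card := by
                exact_mod_cast Finset.card_pos.2 ⟨a₀, ha₀⟩
              field_simp
    refine le_trans (Finset.sum_le_sum inner) ?_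
    calc ∑ c ∈ A, (if c ∈ cls A (S ∩ T) b then (1:ℝ) / (NN A (S ∩ T) b) else 0)
        = ∑ c ∈ A ∩ cls A (S ∩ T) b, (1:ℝ) / (NN A (S ∩ T) b) := by
          rw [Finset.sum_ite_mem]
      _ = 1 := by
          have hsub : cls A (S ∩ T) b ⊆ A := fun x hx => (mem_cls.1 hx).1
          rw [Finset.inter_eq_right.2 hsub]
          rw [Finset.sum_const, nsmul_eq_mul]
          have hpos := NN_pos (S := S ∩ T) hb
          rw [NN] at hpos
          rw [NN, mul_one_div,
            div_self (by exact_mod_cast hpos.ne' : ((cls A (S ∩ T) b).card : ℝ) ≠ 0)]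
      _ ≤ 1 := le_rfl
  refine le_trans (Finset.sum_le_sum step2) ?_
  rw [Finset.sum_const, nsmul_eq_mul, mul_one]

lemma JJ_supermod (A : Finset (Colouring k m)) (S T : Finset (Edge m)) :
    JJ A S + JJ A T ≤ JJ A (S ∪ T) + JJ A (S ∩ T) := by
  rcases A.eq_empty_or_nonempty with rfl | hA
  · simp [JJ]
  · have hpos : ∀ a ∈ A, (0:ℝ) <
        (NN A S a * NN A T a : ℝ) / (NN A (S ∪ T) a * NN A (S ∩ T) a) := by
      intro a ha
      have h1 : (0:ℝ) < NN A S a := by exact_mod_cast NN_pos ha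
      have h2 : (0:ℝ) < NN A T a := by exact_mod_cast NN_pos ha
      have h3 : (0:ℝ) < NN A (S ∪ T) a := by exact_mod_cast NN_pos ha
      have h4 : (0:ℝ) < NN A (S ∩ T) a := by exact_mod_cast NN_pos ha
      exact div_pos (mul_pos h1 h2) (mul_pos h3 h4)
    have hj := sum_log_le A hA _ hpos
    have hcnt := sum_ratio_le A S T
    have hAc : (0:ℝ) < A.card := by exact_mod_cast Finset.card_pos.2 hA
    have h2 : (∑ a ∈ A, (NN A S a * NN A T a : ℝ) /
        (NN A (S ∪ T) a * NN A (S ∩ T) a)) / A.card ≤ 1 := by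
      rw [div_le_one hAc]; exact hcnt
    have hsumpos : (0:ℝ) ≤ (∑ a ∈ A, (NN A S a * NN A T a : ℝ) /
        (NN A (S ∪ T) a * NN A (S ∩ T) a)) / A.card := by
      apply div_nonneg _ hAc.le
      exact Finset.sum_nonneg fun a ha => (hpos a ha).le
    have h3 := Real.log_nonpos hsumpos h2
    have h4 : ∑ a ∈ A, Real.log ((NN A S a * NN A T a : ℝ) /
        (NN A (S ∪ T) a * NN A (S ∩ T) a)) ≤ 0 :=
      hj.trans (mul_nonpos_of_nonneg_of_nonpos hAc.le h3)
    have expand : ∀ a ∈ A, Real.log ((NN A S a * NN A T a : ℝ) /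
        (NN A (S ∪ T) a * NN A (S ∩ T) a))
        = (Real.log (NN A S a) + Real.log (NN A T a))
          - (Real.log (NN A (S ∪ T) a) + Real.log (NN A (S ∩ T) a)) := by
      intro a ha
      have h1 : (NN A S a : ℝ) ≠ 0 := by exact_mod_cast (NN_pos ha).ne'
      have h2 : (NN A T a : ℝ) ≠ 0 := by exact_mod_cast (NN_pos ha).ne'
      have h3 : (NN A (S ∪ T) a : ℝ) ≠ 0 := by exact_mod_cast (NN_pos ha).ne'
      have h4 : (NN A (S ∩ T) a : ℝ) ≠ 0 := by exact_mod_cast (NN_pos ha).ne'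
      rw [Real.log_div (mul_ne_zero h1 h2) (mul_ne_zero h3 h4), Real.log_mul h1 h2,
        Real.log_mul h3 h4]
    rw [Finset.sum_congr rfl expand, Finset.sum_sub_distrib,
      Finset.sum_add_distrib, Finset.sum_add_distrib] at h4
    have e1 : JJ A S = ∑ a ∈ A, Real.log (NN A S a) := rfl
    have e2 : JJ A T = ∑ a ∈ A, Real.log (NN A T a) := rfl
    have e3 : JJ A (S ∪ T) = ∑ a ∈ A, Real.log (NN A (S ∪ T) a) := rfl
    have e4 : JJ A (S ∩ T) = ∑ a ∈ A, Real.log (NN A (S ∩ T) a) := rfl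
    linarith

/-- Projection/entropy bound. -/
lemma proj_bound {β : Type*} [DecidableEq β] (A : Finset (Colouring k m)) (hA : A.Nonempty)
    (S : Finset (Edge m)) (r : Colouring k m → β)
    (hr : ∀ a ∈ A, ∀ b ∈ A, ((∀ e ∈ S, b e = a e) ↔ r b = r a))
    (B : Finset β) (hrB : ∀ a ∈ A, r a ∈ B) :
    A.card * Real.log A.card - JJ A S ≤ A.card * Real.log B.card := by
  classical
  have hfib : ∀ a ∈ A, cls A S a = A.filter (fun b => r b = r a) := by
    intro a ha; ext b
    simp only [cls, Finset.mem_filter]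
    exact ⟨fun ⟨hbA, h⟩ => ⟨hbA, (hr a ha b hbA).1 h⟩,
      fun ⟨hbA, h⟩ => ⟨hbA, (hr a ha b hbA).2 h⟩⟩
  set M := (A.image r).card with hM
  have hsum : ∑ a ∈ A, (1:ℝ)/(NN A S a) = M := by
    rw [← Finset.sum_fiberwise_of_maps_to (g := r) (t := A.image r)
      (fun x hx => Finset.mem_image_of_mem r hx) (fun a => (1:ℝ)/(NN A S a))]
    rw [hM, Finset.card_eq_sum_ones (A.image r)]
    push_cast
    refine Finset.sum_congr rfl fun y hy => ?_
    obtain ⟨a₀, ha₀, ha₀y⟩ := Finset.mem_image.1 hy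
    have hfibcard : ∀ a ∈ A.filter (fun a => r a = y),
        NN A S a = (A.filter (fun a => r a = y)).card := by
      intro a ha'
      obtain ⟨haA, hay⟩ := Finset.mem_filter.1 ha'
      rw [NN, hfib a haA]
      congr 1
      ext b
      simp only [Finset.mem_filter, hay]
    rw [Finset.sum_congr rfl (fun a ha => by rw [hfibcard a ha])]
    rw [Finset.sum_const, nsmul_eq_mul]
    have hposf : 0 < (A.filter (fun a => r a = y)).card :=
      Finset.card_pos.2 ⟨a₀, Finset.mem_filter.2 ⟨ha₀, ha₀y⟩⟩
    rw [mul_one_div, div_self (by exact_mod_cast hposf.ne')]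
  have hAc : (0:ℝ) < A.card := by exact_mod_cast Finset.card_pos.2 hA
  have hp : ∀ a ∈ A, (0:ℝ) < (A.card:ℝ) / NN A S a := by
    intro a ha
    have h0 : (0:ℝ) < NN A S a := by exact_mod_cast NN_pos ha
    exact div_pos hAc h0
  have hj := sum_log_le A hA (fun a => (A.card:ℝ) / NN A S a) hp
  have hsum2 : ∑ a ∈ A, (A.card:ℝ)/NN A S a = A.card * M := by
    rw [Finset.sum_congr rfl (fun (a : Colouring k m) (_ : a ∈ A) =>
      div_eq_mul_one_div (A.card:ℝ) (NN A S a)), ← Finset.mul_sum, hsum]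
  rw [hsum2] at hj
  have hMdiv : (A.card:ℝ) * M / A.card = M := by field_simp
  rw [hMdiv] at hj
  have hexp : ∀ a ∈ A, Real.log ((A.card:ℝ)/NN A S a)
      = Real.log A.card - Real.log (NN A S a) := by
    intro a ha
    exact Real.log_div hAc.ne' (by exact_mod_cast (NN_pos ha).ne')
  rw [Finset.sum_congr rfl hexp, Finset.sum_sub_distrib, Finset.sum_const,
    nsmul_eq_mul] at hj
  have hMB : (M:ℝ) ≤ B.card := by
    exact_mod_cast Finset.card_le_card (Finset.image_subset_iff.2 hrB)
  have hMpos : (0:ℝ) < M := by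
    have : (A.image r).Nonempty := hA.image r
    exact_mod_cast Finset.card_pos.2 this
  have hlog := Real.log_le_log hMpos hMB
  have e1 : JJ A S = ∑ a ∈ A, Real.log (NN A S a) := rfl
  have := mul_le_mul_of_nonneg_left hlog hAc.le
  linarith

section Han

variable {α : Type*} [DecidableEq α] [Fintype α]

/-- initial segment w.r.t. an order function -/
def Pe (ord : α → ℕ) (e : α) : Finset α := Finset.univ.filter (fun e' => ord e' < ord e)

noncomputable def mg (f : Finset α → ℝ) (ord : α → ℕ) (e : α) : ℝ :=
  f (insert e (Pe ord e)) - f (Pe ord e)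

lemma dimret (f : Finset α → ℝ) (ord : α → ℕ)
    (hsub : ∀ S T, f (S ∪ T) + f (S ∩ T) ≤ f S + f T)
    (e : α) (Y : Finset α) (h1 : Pe ord e ⊆ Y) (h2 : e ∉ Y) :
    f (insert e Y) - f Y ≤ mg f ord e := by
  have h := hsub (insert e (Pe ord e)) Y
  have hu : insert e (Pe ord e) ∪ Y = insert e Y := by
    rw [Finset.insert_union, Finset.union_eq_right.2 h1]
  have hi : insert e (Pe ord e) ∩ Y = Pe ord e := by
    rw [Finset.insert_inter_of_notMem h2, Finset.inter_eq_left.2 h1]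
  rw [hu, hi] at h
  unfold mg
  linarith

lemma max_step (ord : α → ℕ) (hinj : Function.Injective ord)
    (s : Finset α) (hne : s.Nonempty) (hlow : ∀ e ∈ s, Pe ord e ⊆ s) :
    ∃ e ∈ s, Pe ord e = s.erase e ∧ ∀ x ∈ s.erase e, Pe ord x ⊆ s.erase e := by
  obtain ⟨e, he, hmax⟩ := Finset.exists_max_image s ord hne
  have hPe : Pe ord e = s.erase e := by
    ext x
    constructor
    · intro hx
      have hxord := (Finset.mem_filter.1 hx).2
      have hxs : x ∈ s := hlow e he hx
      exact Finset.mem_erase.2 ⟨fun h => by subst h; exact lt_irrefl _ hxord, hxs⟩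
    · intro hx
      obtain ⟨hxe, hxs⟩ := Finset.mem_erase.1 hx
      refine Finset.mem_filter.2 ⟨Finset.mem_univ _, ?_⟩
      exact lt_of_le_of_ne (hmax x hxs) (fun h => hxe (hinj h))
  refine ⟨e, he, hPe, fun x hx y hy => ?_⟩
  obtain ⟨hxe, hxs⟩ := Finset.mem_erase.1 hx
  have hyx : ord y < ord x := (Finset.mem_filter.1 hy).2
  have hxle : ord x < ord e :=
    lt_of_le_of_ne (hmax x hxs) (fun h => hxe (hinj h))
  have : y ∈ Pe ord e := Finset.mem_filter.2 ⟨Finset.mem_univ _, hyx.trans hxle⟩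
  rwa [hPe] at this

lemma tele (f : Finset α → ℝ) (ord : α → ℕ) (hinj : Function.Injective ord)
    (s : Finset α) :
    (∀ e ∈ s, Pe ord e ⊆ s) → ∑ e ∈ s, mg f ord e = f s - f ∅ := by
  induction s using Finset.strongInduction with
  | _ s ih =>
    intro hlow
    rcases s.eq_empty_or_nonempty with rfl | hne
    · simp
    obtain ⟨e, he, hPe, hlow'⟩ := max_step ord hinj s hne hlow
    rw [← Finset.add_sum_erase _ _ he, ih (s.erase e) (Finset.erase_ssubset he) hlow']
    have hins : insert e (s.erase e) = s := Finset.insert_erase he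
    simp only [mg]
    rw [hPe, hins]
    ring

lemma starbound (f : Finset α → ℝ) (ord : α → ℕ) (hinj : Function.Injective ord)
    (hsub : ∀ S T, f (S ∪ T) + f (S ∩ T) ≤ f S + f T)
    (st : Finset α) (s : Finset α) :
    (∀ e ∈ s, Pe ord e ⊆ s) →
    f ((Finset.univ \ st) ∪ s) - f (Finset.univ \ st) ≤ ∑ e ∈ s ∩ st, mg f ord e := by
  induction s using Finset.strongInduction with
  | _ s ih =>
    intro hlow
    rcases s.eq_empty_or_nonempty with rfl | hne
    · simp
    obtain ⟨e, he, hPe, hlow'⟩ := max_step ord hinj s hne hlow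
    have hih := ih (s.erase e) (Finset.erase_ssubset he) hlow'
    by_cases hest : e ∈ st
    · have h1 : Pe ord e ⊆ (Finset.univ \ st) ∪ s.erase e := by
        rw [hPe]; exact Finset.subset_union_right
      have h2 : e ∉ (Finset.univ \ st) ∪ s.erase e := by
        intro hmem
        rcases Finset.mem_union.1 hmem with h | h
        · exact (Finset.mem_sdiff.1 h).2 hest
        · exact (Finset.mem_erase.1 h).1 rfl
      have h3 := dimret f ord hsub e _ h1 h2
      have h4 : insert e ((Finset.univ \ st) ∪ s.erase e) = (Finset.univ \ st) ∪ s := by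
        rw [← Finset.union_insert, Finset.insert_erase he]
      have h5 : s ∩ st = insert e (s.erase e ∩ st) := by
        conv_lhs => rw [← Finset.insert_erase he]
        rw [Finset.insert_inter_of_mem hest]
      have h6 : e ∉ s.erase e ∩ st := fun hx =>
        (Finset.mem_erase.1 (Finset.mem_inter.1 hx).1).1 rfl
      rw [h5, Finset.sum_insert h6]
      rw [h4] at h3
      linarith
    · have h4 : (Finset.univ \ st) ∪ s = (Finset.univ \ st) ∪ s.erase e := by
        conv_lhs => rw [← Finset.insert_erase he]
        rw [Finset.union_insert, Finset.insert_eq_self.2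
          (Finset.mem_union_left _ (Finset.mem_sdiff.2 ⟨Finset.mem_univ _, hest⟩))]
      have h5 : s ∩ st = s.erase e ∩ st := by
        conv_lhs => rw [← Finset.insert_erase he]
        rw [Finset.insert_inter_of_notMem hest]
      rw [h4, h5]
      exact hih

end Han


/-- The key Shearer-type step. -/
lemma crux {k n : ℕ} (A : Finset (Colouring k (n+1))) (B : Finset (Colouring k n))
    (hAB : ∀ c ∈ A, ∀ (φ : Fin n → Fin (n+1)) (h : StrictMono φ), restrictC c φ h ∈ B) :
    ((n:ℝ) - 1) * Real.log A.card ≤ ((n:ℝ) + 1) * Real.log B.card := by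
  classical
  have hlogB : (0:ℝ) ≤ Real.log B.card := by
    rcases Nat.eq_zero_or_pos B.card with h | h
    · rw [h]; simp
    · exact Real.log_natCast_nonneg _
  rcases A.eq_empty_or_nonempty with rfl | hA
  · simp only [Finset.card_empty, Nat.cast_zero, Real.log_zero, mul_zero]
    rcases le_or_gt (0:ℝ) ((n:ℝ) + 1) with h | h
    · exact mul_nonneg h hlogB
    · nlinarith
  have hAc : (0:ℝ) < A.card := by exact_mod_cast Finset.card_pos.2 hA
  -- the order function on edges
  set ord : Edge (n+1) → ℕ := fun e => (e.1.1 : ℕ) * (n+1) + (e.1.2 : ℕ) with hord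
  have hinj : Function.Injective ord := by
    intro e e' h
    simp only [hord] at h
    have h1 : (e.1.2 : ℕ) < n+1 := e.1.2.isLt
    have h2 : (e'.1.2 : ℕ) < n+1 := e'.1.2.isLt
    have hmod : (e.1.2:ℕ) = (e'.1.2:ℕ) := by
      have h' : ((e.1.1:ℕ) * (n+1) + (e.1.2:ℕ)) % (n+1)
          = ((e'.1.1:ℕ) * (n+1) + (e'.1.2:ℕ)) % (n+1) := by rw [h]
      have hm : ∀ a b : ℕ, b < n+1 → (a * (n+1) + b) % (n+1) = b := by
        intro a b hb
        rw [Nat.mul_comm, Nat.mul_add_mod, Nat.mod_eq_of_lt hb]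
      rwa [hm _ _ h1, hm _ _ h2] at h'
    have hdiv : (e.1.1:ℕ) = (e'.1.1:ℕ) := by
      rw [hmod] at h
      exact Nat.eq_of_mul_eq_mul_right (Nat.succ_pos n) (Nat.add_right_cancel h)
    exact Subtype.ext (Prod.ext (Fin.ext hdiv) (Fin.ext hmod))
  -- the submodular function
  set f : Finset (Edge (n+1)) → ℝ := fun S => JJ A ∅ - JJ A S with hf
  have hsub : ∀ S T, f (S ∪ T) + f (S ∩ T) ≤ f S + f T := by
    intro S T
    have := JJ_supermod A S T
    simp only [hf]
    linarith
  -- stars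
  set st : Fin (n+1) → Finset (Edge (n+1)) :=
    fun v => Finset.univ.filter (fun e => e.1.1 = v ∨ e.1.2 = v) with hst
  -- star bound via telescoping
  have hstar : ∀ v, f Finset.univ - f (Finset.univ \ st v) ≤ ∑ e ∈ st v, mg f ord e := by
    intro v
    have h := starbound f ord hinj hsub (st v) Finset.univ
      (fun e _ => Finset.filter_subset _ _)
    rw [Finset.union_eq_right.2 (Finset.subset_univ _), Finset.univ_inter] at h
    exact h
  have htele : ∑ e : Edge (n+1), mg f ord e = f Finset.univ := by
    have h := tele f ord hinj Finset.univ (fun e _ => Finset.filter_subset _ _)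
    have hf0 : f ∅ = 0 := by simp [hf]
    rw [hf0] at h
    simpa using h
  -- counting: each edge is in exactly two stars
  have hcount : ∑ v : Fin (n+1), ∑ e ∈ st v, mg f ord e
      = 2 * ∑ e : Edge (n+1), mg f ord e := by
    have h1 : ∀ v, ∑ e ∈ st v, mg f ord e
        = ∑ e : Edge (n+1), (if e.1.1 = v ∨ e.1.2 = v then mg f ord e else 0) := by
      intro v
      rw [hst]
      rw [Finset.sum_filter]
    rw [Finset.sum_congr rfl (fun v _ => h1 v), Finset.sum_comm]
    rw [Finset.mul_sum]
    refine Finset.sum_congr rfl fun e _ => ?_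
    have h2 : ∑ v : Fin (n+1), (if e.1.1 = v ∨ e.1.2 = v then mg f ord e else 0)
        = ∑ v ∈ Finset.univ.filter (fun v => e.1.1 = v ∨ e.1.2 = v), mg f ord e := by
      rw [Finset.sum_filter]
    have h3 : Finset.univ.filter (fun v => e.1.1 = v ∨ e.1.2 = v) = {e.1.1, e.1.2} := by
      ext v
      simp only [Finset.mem_filter, Finset.mem_univ, true_and, Finset.mem_insert,
        Finset.mem_singleton]
      constructor
      · rintro (h | h) <;> simp [h.symm]
      · rintro (h | h) <;> simp [h]
    rw [h2, h3, Finset.sum_const, Finset.card_pair (ne_of_lt e.2), nsmul_eq_mul]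
    push_cast
    ring
  -- Han inequality
  have hhan : ((n:ℝ) - 1) * f Finset.univ ≤ ∑ v : Fin (n+1), f (Finset.univ \ st v) := by
    have h1 : ∑ v : Fin (n+1), (f Finset.univ - f (Finset.univ \ st v))
        ≤ 2 * f Finset.univ := by
      calc ∑ v : Fin (n+1), (f Finset.univ - f (Finset.univ \ st v))
          ≤ ∑ v : Fin (n+1), ∑ e ∈ st v, mg f ord e :=
            Finset.sum_le_sum fun v _ => hstar v
        _ = 2 * f Finset.univ := by rw [hcount, htele]
    rw [Finset.sum_sub_distrib, Finset.sum_const, Finset.card_univ,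
      Fintype.card_fin, nsmul_eq_mul] at h1
    push_cast at h1
    linarith
  -- projection bound for each v
  have hproj : ∀ v : Fin (n+1), f (Finset.univ \ st v) ≤ A.card * Real.log B.card := by
    intro v
    have hfval : f (Finset.univ \ st v)
        = A.card * Real.log A.card - JJ A (Finset.univ \ st v) := by
      rw [hf]; simp only []
      rw [JJ_empty]
    rw [hfval]
    set φ : Fin n → Fin (n+1) := Fin.succAbove v with hφ
    have hφm : StrictMono φ := Fin.strictMono_succAbove v
    set r : Colouring k (n+1) → Colouring k n := fun c => restrictC c φ hφm with hrdef
    have hmemS : ∀ e : Edge (n+1), e ∈ Finset.univ \ st v ↔ (e.1.1 ≠ v ∧ e.1.2 ≠ v) := by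
      intro e
      rw [Finset.mem_sdiff, hst]
      simp only [Finset.mem_univ, true_and, Finset.mem_filter]
      tauto
    have hr : ∀ a ∈ A, ∀ b ∈ A,
        ((∀ e ∈ Finset.univ \ st v, b e = a e) ↔ r b = r a) := by
      intro a _ b _
      constructor
      · intro h
        funext e'
        apply h
        rw [hmemS]
        exact ⟨Fin.succAbove_ne v e'.1.1, Fin.succAbove_ne v e'.1.2⟩
      · intro h e he
        rw [hmemS] at he
        obtain ⟨i, hi⟩ := Fin.exists_succAbove_eq he.1
        obtain ⟨j, hj⟩ := Fin.exists_succAbove_eq he.2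
        have hij : i < j := by
          have h2 := e.2
          rw [← hi, ← hj] at h2
          exact hφm.lt_iff_lt.1 h2
        have hcf := congrFun h (⟨(i, j), hij⟩ : Edge n)
        have hedge : Edge.map φ hφm (⟨(i, j), hij⟩ : Edge n) = e := by
          apply Subtype.ext
          apply Prod.ext
          · exact hi
          · exact hj
        simp only [hrdef, restrictC] at hcf
        rw [hedge] at hcf
        exact hcf
    exact proj_bound A hA (Finset.univ \ st v) r hr B
      (fun a ha => hAB a ha φ hφm)
  -- combine
  have hfuniv : f Finset.univ = A.card * Real.log A.card := by
    rw [hf]; simp only []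
    rw [JJ_empty, JJ_univ]
    ring
  have hfinal : ((n:ℝ) - 1) * ((A.card:ℝ) * Real.log A.card)
      ≤ ((n:ℝ) + 1) * ((A.card:ℝ) * Real.log B.card) := by
    rw [← hfuniv]
    calc ((n:ℝ) - 1) * f Finset.univ
        ≤ ∑ v : Fin (n+1), f (Finset.univ \ st v) := hhan
      _ ≤ ∑ _v : Fin (n+1), (A.card:ℝ) * Real.log B.card :=
          Finset.sum_le_sum fun v _ => hproj v
      _ = ((n:ℝ) + 1) * ((A.card:ℝ) * Real.log B.card) := by
          rw [Finset.sum_const, Finset.card_univ, Fintype.card_fin, nsmul_eq_mul]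
          push_cast; ring
  have e1 : (A.card:ℝ) * (((n:ℝ) - 1) * Real.log A.card)
      = ((n:ℝ) - 1) * ((A.card:ℝ) * Real.log A.card) := by ring
  have e2 : (A.card:ℝ) * (((n:ℝ) + 1) * Real.log B.card)
      = ((n:ℝ) + 1) * ((A.card:ℝ) * Real.log B.card) := by ring
  have h2 : (A.card:ℝ) * (((n:ℝ) - 1) * Real.log A.card)
      ≤ (A.card:ℝ) * (((n:ℝ) + 1) * Real.log B.card) := by
    rw [e1, e2]; exact hfinal
  exact (mul_le_mul_iff_right₀ hAc).1 h2

end Classes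

lemma restrict_comp {k m' n' p' : ℕ} (c : Colouring k n') (φ : Fin m' → Fin n')
    (hφ : StrictMono φ) (ψ : Fin p' → Fin m') (hψ : StrictMono ψ) :
    restrictC (restrictC c φ hφ) ψ hψ = restrictC c (φ ∘ ψ) (hφ.comp hψ) := rfl

lemma restrict_id {k n' : ℕ} (c : Colouring k n') : restrictC c id strictMono_id = c := rfl

lemma forb_restrict {k N : ℕ} (F : Set (Colouring k N)) {m' n' : ℕ}
    (c : Colouring k n') (hc : c ∈ Forb F n') (φ : Fin m' → Fin n') (h : StrictMono φ) :
    restrictC c φ h ∈ Forb F m' := by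
  intro ψ hψ
  rw [restrict_comp]
  exact hc (φ ∘ ψ) (h.comp hψ)

lemma choose_cast (j : ℕ) : ((j.choose 2 : ℕ) : ℝ) = j * (j - 1) / 2 := by
  induction j with
  | zero => simp
  | succ i ih =>
    have h : (i+1).choose 2 = i.choose 1 + i.choose 2 := Nat.choose_succ_succ i 1
    rw [h, Nat.choose_one_right]
    push_cast
    rw [ih]
    ring

lemma choose_succ_id (j : ℕ) :
    ((j:ℝ) + 1) * ((j.choose 2 : ℕ) : ℝ) = ((j:ℝ) - 1) * (((j+1).choose 2 : ℕ) : ℝ) := by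
  rw [choose_cast, choose_cast]
  push_cast
  ring

lemma forb_chain' {k N : ℕ} (hN : 2 ≤ N) (F : Set (Colouring k N)) (j : ℕ) :
    Real.log ((Forb F (N+j)).ncard) * ((N.choose 2 : ℕ) : ℝ)
      ≤ Real.log ((Forb F N).ncard) * (((N+j).choose 2 : ℕ) : ℝ) := by
  induction j with
  | zero => exact le_rfl
  | succ i ih =>
    set n := N + i with hn
    have hstep : ((n:ℝ) - 1) * Real.log ((Forb F (n+1)).ncard)
        ≤ ((n:ℝ) + 1) * Real.log ((Forb F n).ncard) := by
      have hfinA : (Forb F (n+1)).Finite := Set.toFinite _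
      have hfinB : (Forb F n).Finite := Set.toFinite _
      have h := crux hfinA.toFinset hfinB.toFinset ?_
      · rwa [← Set.ncard_eq_toFinset_card _ hfinA, ← Set.ncard_eq_toFinset_card _ hfinB] at h
      · intro c hc φ hφ
        rw [Set.Finite.mem_toFinset] at hc ⊢
        exact forb_restrict F c hc φ hφ
    have hn2 : (2:ℝ) ≤ (n:ℝ) := by
      have : 2 ≤ n := le_trans hN (Nat.le_add_right N i)
      exact_mod_cast this
    have hpos : (0:ℝ) < (n:ℝ) - 1 := by linarith
    have hχN : (0:ℝ) ≤ ((N.choose 2 : ℕ) : ℝ) := Nat.cast_nonneg _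
    have key : ((n:ℝ)-1) * (Real.log ((Forb F (n+1)).ncard) * ((N.choose 2:ℕ):ℝ))
        ≤ ((n:ℝ)-1) * (Real.log ((Forb F N).ncard) * (((n+1).choose 2:ℕ):ℝ)) := by
      calc ((n:ℝ)-1) * (Real.log ((Forb F (n+1)).ncard) * ((N.choose 2:ℕ):ℝ))
          = (((n:ℝ)-1) * Real.log ((Forb F (n+1)).ncard)) * ((N.choose 2:ℕ):ℝ) := by ring
        _ ≤ (((n:ℝ)+1) * Real.log ((Forb F n).ncard)) * ((N.choose 2:ℕ):ℝ) :=
            mul_le_mul_of_nonneg_right hstep hχN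
        _ = ((n:ℝ)+1) * (Real.log ((Forb F n).ncard) * ((N.choose 2:ℕ):ℝ)) := by ring
        _ ≤ ((n:ℝ)+1) * (Real.log ((Forb F N).ncard) * (((N+i).choose 2:ℕ):ℝ)) := by
            apply mul_le_mul_of_nonneg_left ih (by linarith : (0:ℝ) ≤ (n:ℝ)+1)
        _ = Real.log ((Forb F N).ncard) * (((n:ℝ)+1) * (((n).choose 2:ℕ):ℝ)) := by
            rw [← hn]; ring
        _ = Real.log ((Forb F N).ncard) * (((n:ℝ)-1) * ((((n+1)).choose 2:ℕ):ℝ)) := by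
            rw [choose_succ_id n]
        _ = ((n:ℝ)-1) * (Real.log ((Forb F N).ncard) * ((((n+1)).choose 2:ℕ):ℝ)) := by ring
    have hres := le_of_mul_le_mul_left key hpos
    have heq : N + (i+1) = n + 1 := rfl
    rw [heq]
    exact hres


end ShearerAux

/-- Approximation of general order-hereditary properties (Theorem 2.15). -/
theorem approximation_of_hereditary (k : ℕ) (hk : 2 ≤ k)
    (P : ∀ n, Set (Colouring k n)) (hP : OrderHereditary P)
    (hne : ∀ n, (P n).Nonempty) (ε : ℝ) (hε : 0 < ε) :
    ∃ (N n₀ : ℕ) (F : Set (Colouring k N)), ∀ n, n₀ ≤ n →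
      P n ⊆ Forb F n ∧
      ((Forb F n).ncard : ℝ) ≤ ((P n).ncard : ℝ) * (k : ℝ) ^ (ε * (n.choose 2 : ℝ)) := by
  classical
  have hk1 : (1:ℝ) < k := by exact_mod_cast lt_of_lt_of_le one_lt_two hk
  have hkpos : (0:ℝ) < k := lt_trans one_pos hk1
  have hlogk : 0 < Real.log k := Real.log_pos hk1
  set δ := ε * Real.log k with hδdef
  have hδ : 0 < δ := mul_pos hε hlogk
  set Sset : Set ℝ :=
    {x | ∃ m : ℕ, 2 ≤ m ∧ x = Real.log ((P m).ncard) / ((m.choose 2 : ℕ) : ℝ)} with hSset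
  have hSne : Sset.Nonempty := ⟨_, 2, le_refl 2, rfl⟩
  have hbdd : BddBelow Sset := by
    refine ⟨0, fun x hx => ?_⟩
    obtain ⟨m, hm, rfl⟩ := hx
    apply div_nonneg _ (Nat.cast_nonneg _)
    exact Real.log_natCast_nonneg _
  obtain ⟨y, hyS, hylt⟩ := exists_lt_of_csInf_lt hSne (lt_add_of_pos_right (sInf Sset) hδ)
  obtain ⟨N, hN2, rfl⟩ := hyS
  refine ⟨N, N, (P N)ᶜ, fun n hn => ?_⟩
  have hPsubforb : ∀ n' : ℕ, P n' ⊆ Forb (P N)ᶜ n' := by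
    intro n' c' hc' φ hφ
    simp only [Set.mem_compl_iff, not_not]
    exact hP N n' φ hφ c' hc'
  refine ⟨hPsubforb n, ?_⟩
  have hn2 : 2 ≤ n := le_trans hN2 hn
  have hχn : (0:ℝ) < ((n.choose 2 : ℕ) : ℝ) := by exact_mod_cast Nat.choose_pos hn2
  have hχN : (0:ℝ) < ((N.choose 2 : ℕ) : ℝ) := by exact_mod_cast Nat.choose_pos hN2
  have hPn_pos : (0:ℝ) < (P n).ncard := by
    exact_mod_cast (Set.ncard_pos (Set.toFinite _)).2 (hne n)
  have hForb_pos : (0:ℝ) < ((Forb (P N)ᶜ n).ncard : ℝ) := by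
    have hne' : (Forb (P N)ᶜ n).Nonempty := (hne n).mono (hPsubforb n)
    exact_mod_cast (Set.ncard_pos (Set.toFinite _)).2 hne'
  have hchain : Real.log ((Forb (P N)ᶜ n).ncard) * ((N.choose 2 : ℕ) : ℝ)
      ≤ Real.log ((Forb (P N)ᶜ N).ncard) * ((n.choose 2 : ℕ) : ℝ) := by
    obtain ⟨j, rfl⟩ := Nat.exists_eq_add_of_le hn
    exact ShearerAux.forb_chain' hN2 _ j
  have hFN : Forb (P N)ᶜ N ⊆ P N := by
    intro c' hc'
    have h := hc' id strictMono_id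
    rw [ShearerAux.restrict_id] at h
    simpa using h
  have hFNpos : (0:ℝ) < ((Forb (P N)ᶜ N).ncard : ℝ) := by
    have hne' : (Forb (P N)ᶜ N).Nonempty := (hne N).mono (hPsubforb N)
    exact_mod_cast (Set.ncard_pos (Set.toFinite _)).2 hne'
  have hLN : Real.log ((Forb (P N)ᶜ N).ncard) ≤ Real.log ((P N).ncard) := by
    have hsub := Set.ncard_le_ncard hFN (Set.toFinite _)
    exact Real.log_le_log hFNpos (by exact_mod_cast hsub)
  have hcle : sInf Sset ≤ Real.log ((P n).ncard) / ((n.choose 2 : ℕ) : ℝ) :=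
    csInf_le hbdd ⟨n, hn2, rfl⟩
  have hLn : Real.log ((Forb (P N)ᶜ n).ncard)
      ≤ Real.log ((P N).ncard) / ((N.choose 2:ℕ):ℝ) * ((n.choose 2:ℕ):ℝ) := by
    rw [div_mul_eq_mul_div, le_div_iff₀ hχN]
    calc Real.log ((Forb (P N)ᶜ n).ncard) * ((N.choose 2:ℕ):ℝ)
        ≤ Real.log ((Forb (P N)ᶜ N).ncard) * ((n.choose 2:ℕ):ℝ) := hchain
      _ ≤ Real.log ((P N).ncard) * ((n.choose 2:ℕ):ℝ) :=
          mul_le_mul_of_nonneg_right hLN hχn.le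
  have h1 : Real.log ((P N).ncard) / ((N.choose 2:ℕ):ℝ) * ((n.choose 2:ℕ):ℝ)
      < (sInf Sset + δ) * ((n.choose 2:ℕ):ℝ) := mul_lt_mul_of_pos_right hylt hχn
  have h2 : sInf Sset * ((n.choose 2:ℕ):ℝ) ≤ Real.log ((P n).ncard) := by
    have h3 := mul_le_mul_of_nonneg_right hcle hχn.le
    rwa [div_mul_cancel₀ _ hχn.ne'] at h3
  have h4 : (sInf Sset + δ) * ((n.choose 2:ℕ):ℝ)
      = sInf Sset * ((n.choose 2:ℕ):ℝ) + δ * ((n.choose 2:ℕ):ℝ) := by ring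
  have hfin : Real.log ((Forb (P N)ᶜ n).ncard)
      ≤ Real.log ((P n).ncard) + δ * ((n.choose 2:ℕ):ℝ) := by linarith
  -- exponentiate
  have hcast : ((n.choose 2 : ℕ) : ℝ) = (n.choose 2 : ℝ) := rfl
  have hrpos : (0:ℝ) < (k : ℝ) ^ (ε * (n.choose 2 : ℝ)) := Real.rpow_pos_of_pos hkpos _
  rw [← Real.log_le_log_iff hForb_pos (by positivity)]
  rw [Real.log_mul (ne_of_gt hPn_pos) (ne_of_gt hrpos)]
  rw [Real.log_rpow hkpos]
  have h5 : ε * (n.choose 2 : ℝ) * Real.log k = δ * ((n.choose 2:ℕ):ℝ) := by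
    rw [hcast]; rw [hδdef]; ring
  rw [h5]
  exact hfin
end

section
/- Universal lemma for entropy-dense templates: Let P be a hereditary property of graphs, let r ≥ 2, ℓ ≥ 1 and ε > 0. There exists n₀ = n₀(P, r, ℓ, ε) such that if n ≥ n₀ and t is a 2-colouring template for K_n (colour 1 encoding non-edges and colour 2 encoding edges) such that every realisation of t, regarded as a graph, lies in P_n, and Ent(t) ≥ (1 − 1/r + ε)·C(n,2), then there exists v ∈ {0,1}^{r+1} with H(r+1, v)_ℓ ⊆ P. -/
open Filter

/-- A graph property (closed under isomorphism) is hereditary if it is symmetric and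
closed under taking induced subgraphs; equivalently, it is closed under pulling back
along arbitrary injections of vertex sets. -/
def GraphHereditary (P : ∀ n, Set (SimpleGraph (Fin n))) : Prop :=
  ∀ (m n : ℕ) (f : Fin m ↪ Fin n) (G : SimpleGraph (Fin n)),
    G ∈ P n → G.comap f ∈ P m

/-- The graph on `[n]` associated to a 2-colouring of `E(K_n)`: the edges are the pairs
of colour `1` (with colour `0` encoding non-edges). -/
def colouringGraph {n : ℕ} (c : Colouring 2 n) : SimpleGraph (Fin n) :=
  SimpleGraph.fromRel (fun x y => ∃ h : x < y, c ⟨(x, y), h⟩ = 1)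

/-- `G` belongs to the class `H(r, v)_ℓ`: its vertex set can be partitioned into `r` parts
each of size at most `ℓ`, the `i`-th part inducing a complete graph if `v i = true` and
an empty graph if `v i = false` (edges between different parts being arbitrary). -/
def InHl {r m : ℕ} (ℓ : ℕ) (v : Fin r → Bool) (G : SimpleGraph (Fin m)) : Prop :=
  ∃ f : Fin m → Fin r, (∀ i : Fin r, ({x : Fin m | f x = i}).ncard ≤ ℓ) ∧
    ∀ x y : Fin m, x ≠ y → f x = f y → (G.Adj x y ↔ v (f x) = true)

open Finset in
theorem ramsey2 (a b : ℕ) : ∃ N : ℕ, ∀ {α : Type} [DecidableEq α]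
    (f : α → α → Bool), (∀ x y, f x y = f y x) → ∀ (V : Finset α), N ≤ V.card →
    ∃ S ⊆ V, (S.card = a ∧ ∀ x ∈ S, ∀ y ∈ S, x ≠ y → f x y = true) ∨
             (S.card = b ∧ ∀ x ∈ S, ∀ y ∈ S, x ≠ y → f x y = false) := by
  induction a generalizing b with
  | zero => exact ⟨0, fun f _ V _ => ⟨∅, empty_subset V, Or.inl ⟨rfl, by simp⟩⟩⟩
  | succ a iha =>
    induction b with
    | zero => exact ⟨0, fun f _ V _ => ⟨∅, empty_subset V, Or.inr ⟨rfl, by simp⟩⟩⟩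
    | succ b ihb =>
      obtain ⟨N₁, h₁⟩ := iha (b + 1)
      obtain ⟨N₂, h₂⟩ := ihb
      refine ⟨N₁ + N₂ + 1, fun f hsym V hV => ?_⟩
      obtain ⟨v, hv⟩ : V.Nonempty := card_pos.mp (by omega)
      set W₁ := (V.erase v).filter (fun x => f v x = true) with hW₁
      set W₂ := (V.erase v).filter (fun x => ¬ (f v x = true)) with hW₂
      have hW₁V : W₁ ⊆ V := (filter_subset _ _).trans (erase_subset _ _)
      have hW₂V : W₂ ⊆ V := (filter_subset _ _).trans (erase_subset _ _)
      have hvW₁ : v ∉ W₁ := fun hmem => notMem_erase v V (mem_of_mem_filter _ hmem)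
      have hvW₂ : v ∉ W₂ := fun hmem => notMem_erase v V (mem_of_mem_filter _ hmem)
      have hcard : W₁.card + W₂.card = V.card - 1 := by
        rw [hW₁, hW₂, card_filter_add_card_filter_not, card_erase_of_mem hv]
      have hcases : N₁ ≤ W₁.card ∨ N₂ ≤ W₂.card := by omega
      rcases hcases with h | h
      · obtain ⟨S, hS, hc⟩ := h₁ f hsym W₁ h
        rcases hc with ⟨hca, hmono⟩ | ⟨hcb, hmono⟩
        · refine ⟨insert v S, ?_, Or.inl ⟨?_, ?_⟩⟩
          · exact insert_subset hv (hS.trans hW₁V)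
          · rw [card_insert_of_notMem (fun hvS => hvW₁ (hS hvS)), hca]
          · intro x hx y hy hxy
            have fvmem : ∀ z ∈ S, f v z = true := fun z hz => (mem_filter.mp (hS hz)).2
            rcases mem_insert.mp hx with hxv | hxS <;> rcases mem_insert.mp hy with hyv | hyS
            · exact absurd (hxv.trans hyv.symm) hxy
            · rw [hxv]; exact fvmem y hyS
            · rw [hyv, hsym]; exact fvmem x hxS
            · exact hmono x hxS y hyS hxy
        · exact ⟨S, hS.trans hW₁V, Or.inr ⟨hcb, hmono⟩⟩
      · obtain ⟨S, hS, hc⟩ := h₂ f hsym W₂ h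
        rcases hc with ⟨hca, hmono⟩ | ⟨hcb, hmono⟩
        · exact ⟨S, hS.trans hW₂V, Or.inl ⟨hca, hmono⟩⟩
        · refine ⟨insert v S, ?_, Or.inr ⟨?_, ?_⟩⟩
          · exact insert_subset hv (hS.trans hW₂V)
          · rw [card_insert_of_notMem (fun hvS => hvW₂ (hS hvS)), hcb]
          · intro x hx y hy hxy
            have fvmem : ∀ z ∈ S, f v z = false := fun z hz => by
              have := (mem_filter.mp (hS hz)).2; simpa using this
            rcases mem_insert.mp hx with hxv | hxS <;> rcases mem_insert.mp hy with hyv | hyS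
            · exact absurd (hxv.trans hyv.symm) hxy
            · rw [hxv]; exact fvmem y hyS
            · rw [hyv, hsym]; exact fvmem x hxS
            · exact hmono x hxS y hyS hxy


open Finset in
set_option maxHeartbeats 1000000 in
theorem multi (r : ℕ) (hr : 1 ≤ r) (ε : ℝ) (hε : 0 < ε) :
    ∀ j, j ≤ r + 1 → ∀ s : ℕ, ∃ m₀ : ℕ, ∀ (n : ℕ) (A : Fin n → Fin n → Bool),
    (∀ x y, A x y = A y x) → (∀ x, A x x = false) →
    ∀ S : Finset (Fin n), m₀ ≤ S.card →
    (∀ v ∈ S, (1 - 1/(r:ℝ) + ε) * S.card ≤ ((S.filter fun w => A v w = true).card : ℝ)) →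
    ∃ B : Fin j → Finset (Fin n), (∀ i, B i ⊆ S) ∧ (∀ i, (B i).card = s) ∧
      (∀ i i', i ≠ i' → ∀ x ∈ B i, ∀ y ∈ B i', A x y = true) := by
  intro j
  induction j with
  | zero =>
    intro _ s
    exact ⟨0, fun n A _ _ S _ _ => ⟨fun i => i.elim0, fun i => i.elim0, fun i => i.elim0,
      fun i => i.elim0⟩⟩
  | succ j ihj =>
    intro hj1 s
    rcases Nat.eq_zero_or_pos j with rfl | hjpos
    · -- one part : trivial
      refine ⟨s, fun n A hsym hirr S hcard _ => ?_⟩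
      obtain ⟨T, hTS, hTcard⟩ := Finset.exists_subset_card_eq hcard
      refine ⟨fun _ => T, fun _ => hTS, fun _ => hTcard, fun i i' hne => ?_⟩
      exact absurd (Fin.ext (by have := i.isLt; have := i'.isLt; omega)) hne
    · have hjr : j ≤ r := by omega
      obtain ⟨S₀, hsS₀, hS₀pos, hS₀ε⟩ : ∃ S₀ : ℕ, s ≤ S₀ ∧ 0 < S₀ ∧ (2 * s : ℝ) ≤ ε * S₀ := by
        refine ⟨s + 1 + ⌈(2 * s : ℝ) / ε⌉₊, by omega, by omega, ?_⟩
        have h1 : (2 * s : ℝ) / ε ≤ (⌈(2 * s : ℝ) / ε⌉₊ : ℝ) := Nat.le_ceil _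
        have h2 : ((⌈(2 * s : ℝ) / ε⌉₊ : ℕ) : ℝ) ≤ ((s + 1 + ⌈(2 * s : ℝ) / ε⌉₊ : ℕ) : ℝ) := by
          exact_mod_cast (by omega : (⌈(2 * s : ℝ) / ε⌉₊ : ℕ) ≤ s + 1 + ⌈(2 * s : ℝ) / ε⌉₊)
        have := (div_le_iff₀ hε).mp (h1.trans h2)
        linarith
      set K : ℕ := (S₀.choose s) ^ j with hKdef
      have hKpos : 0 < K := pow_pos (Nat.choose_pos hsS₀) _
      obtain ⟨m₁, hm₁⟩ := ihj (by omega) S₀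
      refine ⟨max m₁ ⌈(2 * (K * (s + j * S₀) + 1) : ℝ) / ε⌉₊, fun n A hsym hirr S hcard hdeg => ?_⟩
      classical
      obtain ⟨B, hBS, hBcard, hBcross⟩ := hm₁ n A hsym hirr S (le_trans (le_max_left _ _) hcard) hdeg
      have hdisj : ∀ i i' : Fin j, i ≠ i' → Disjoint (B i) (B i') := by
        intro i i' hne
        rw [Finset.disjoint_left]
        intro z hz hz'
        have := hBcross i i' hne z hz z hz'
        rw [hirr] at this
        exact Bool.false_ne_true this
      set W : Finset (Fin n) := Finset.univ.biUnion B with hWdef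
      have hWcard : W.card = j * S₀ := by
        rw [hWdef, card_biUnion (fun x _ y _ h => hdisj x y h)]
        simp [hBcard, mul_comm]
      have hWS : W ⊆ S := by
        intro x hx
        obtain ⟨i, _, hxi⟩ := Finset.mem_biUnion.mp hx
        exact hBS i hxi
      set cnt : Fin n → Fin j → ℕ := fun u i => ((B i).filter fun w => A u w = true).card with hcnt
      set U : Finset (Fin n) := S.filter (fun u => ∀ i, s ≤ cnt u i) with hUdef
      have hWfilter : ∀ u, (W.filter fun w => A u w = true).card = ∑ i, cnt u i := by
        intro u
        rw [hWdef, filter_biUnion, card_biUnion]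
        intro x _ y _ h
        exact Finset.disjoint_filter_filter (hdisj x y h)
      set T : ℕ := ∑ u ∈ S, (W.filter fun w => A u w = true).card with hTdef
      have hswap : T = ∑ w ∈ W, (S.filter fun u => A u w = true).card := by
        rw [hTdef]
        simp only [card_filter]
        rw [Finset.sum_comm]
      have hTlow : ((1 - 1/(r:ℝ) + ε) * S.card) * (j * S₀) ≤ (T : ℝ) := by
        rw [hswap]
        push_cast
        calc ((1 - 1/(r:ℝ) + ε) * S.card) * (j * S₀)
            = ∑ _w ∈ W, (1 - 1/(r:ℝ) + ε) * S.card := by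
              rw [Finset.sum_const, hWcard, nsmul_eq_mul]; push_cast; ring
          _ ≤ ∑ w ∈ W, ((S.filter fun u => A u w = true).card : ℝ) := by
              apply Finset.sum_le_sum
              intro w hw
              have heq : (S.filter fun u => A u w = true) = (S.filter fun u => A w u = true) := by
                apply Finset.filter_congr
                intro x _
                rw [hsym]
              rw [heq]
              exact hdeg w (hWS hw)
      have hTup : T ≤ U.card * (j * S₀) + S.card * ((j-1) * S₀ + s) := by
        rw [hTdef, ← Finset.sum_filter_add_sum_filter_not S (fun u => ∀ i, s ≤ cnt u i)]
        have hb1 : ∑ u ∈ U, (W.filter fun w => A u w = true).card ≤ U.card * (j * S₀) := by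
          apply le_trans (Finset.sum_le_card_nsmul _ _ (j * S₀) ?_)
          · simp [smul_eq_mul]
          · intro x _
            calc (W.filter fun w => A x w = true).card ≤ W.card := card_le_card (filter_subset _ _)
              _ = j * S₀ := hWcard
        have hb2 : ∑ u ∈ S.filter (fun u => ¬ ∀ i, s ≤ cnt u i),
            (W.filter fun w => A u w = true).card ≤ S.card * ((j-1) * S₀ + s) := by
          apply le_trans (Finset.sum_le_card_nsmul _ _ ((j-1) * S₀ + s) ?_)
          · simp only [smul_eq_mul]
            exact Nat.mul_le_mul_right _ (card_le_card (filter_subset _ _))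
          · intro u hu
            obtain ⟨i₀, hi₀⟩ : ∃ i₀, cnt u i₀ < s := by
              have := (Finset.mem_filter.mp hu).2
              push_neg at this
              obtain ⟨i₀, h⟩ := this
              exact ⟨i₀, h⟩
            rw [hWfilter u, ← Finset.add_sum_erase _ _ (Finset.mem_univ i₀)]
            have herase : ∑ i ∈ Finset.univ.erase i₀, cnt u i ≤ (j-1) * S₀ := by
              apply le_trans (Finset.sum_le_card_nsmul _ _ S₀ ?_)
              · simp only [smul_eq_mul, Finset.card_erase_of_mem (Finset.mem_univ i₀),
                  Finset.card_univ, Fintype.card_fin]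
                exact le_rfl
              · intro i _
                exact le_trans (card_le_card (filter_subset _ _)) (le_of_eq (hBcard i))
            omega
        exact Nat.add_le_add hb1 hb2
      have hrR : (0:ℝ) < r := by exact_mod_cast hr
      have hjR : (1:ℝ) ≤ j := by exact_mod_cast hjpos
      have hS₀R : (0:ℝ) < S₀ := by exact_mod_cast hS₀pos
      have hScard0 : (0:ℝ) ≤ S.card := Nat.cast_nonneg _
      have hUlow : (ε/2) * S.card ≤ (U.card : ℝ) := by
        have hTupR : (T:ℝ) ≤ U.card * (j * S₀) + S.card * (((j:ℝ)-1) * S₀ + s) := by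
          have h : (T:ℝ) ≤ ((U.card * (j * S₀) + S.card * ((j-1) * S₀ + s) : ℕ) : ℝ) :=
            Nat.cast_le.mpr hTup
          push_cast [Nat.cast_sub (by omega : 1 ≤ j)] at h
          exact h
        have hkey := le_trans hTlow hTupR
        have hjr1 : (j:ℝ) * (1/(r:ℝ)) ≤ 1 := by
          rw [mul_one_div]
          exact (div_le_one hrR).mpr (by exact_mod_cast hjr)
        have e1 : ((j:ℝ) - 1) * S₀ + ε * j * S₀ ≤ (1 - 1/(r:ℝ) + ε) * (j * S₀) := by
          have hf := mul_le_mul_of_nonneg_right hjr1 hS₀R.le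
          ring_nf at hf ⊢
          linarith [hf]
        have e2 : S.card * (((j:ℝ) - 1) * S₀ + ε * j * S₀) ≤
            (U.card : ℝ) * (j * S₀) + S.card * (((j:ℝ)-1) * S₀ + s) := by
          have hf := mul_le_mul_of_nonneg_left e1 hScard0
          ring_nf at hf hkey ⊢
          linarith [hf, hkey]
        have hsj : (s:ℝ) ≤ ε * j * S₀ / 2 := by
          have hf := mul_le_mul_of_nonneg_left hjR (by positivity : (0:ℝ) ≤ ε * S₀)
          ring_nf at hf ⊢
          linarith [hf, hS₀ε]
        have e3 : S.card * (ε * j * S₀ / 2) ≤ (U.card : ℝ) * ((j:ℝ) * S₀) := by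
          have hf := mul_le_mul_of_nonneg_left hsj hScard0
          ring_nf at hf e2 ⊢
          linarith [hf, e2]
        have hjS₀pos : (0:ℝ) < (j:ℝ) * S₀ := by positivity
        have e4 : (ε/2) * S.card * ((j:ℝ) * S₀) ≤ (U.card : ℝ) * ((j:ℝ) * S₀) := by
          ring_nf at e3 ⊢
          linarith [e3]
        exact le_of_mul_le_mul_right e4 hjS₀pos
      set g : Fin n → (Fin j → Finset (Fin n)) := fun u i =>
        if h : s ≤ cnt u i then (Finset.exists_subset_card_eq h).choose else ∅ with hgdef
      have hgspec : ∀ u ∈ U, ∀ i, g u i ⊆ ((B i).filter fun w => A u w = true) ∧ (g u i).card = s := by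
        intro u hu i
        have hs : s ≤ cnt u i := (Finset.mem_filter.mp hu).2 i
        rw [hgdef]
        simp only [hs, dif_pos]
        exact (Finset.exists_subset_card_eq hs).choose_spec
      have hmaps : ∀ u ∈ U, g u ∈ Fintype.piFinset (fun i => (B i).powersetCard s) := by
        intro u hu
        rw [Fintype.mem_piFinset]
        intro i
        rw [Finset.mem_powersetCard]
        exact ⟨(hgspec u hu i).1.trans (filter_subset _ _), (hgspec u hu i).2⟩
      have hpicard : (Fintype.piFinset (fun i : Fin j => (B i).powersetCard s)).card = K := by
        rw [Fintype.card_piFinset]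
        simp [hBcard, Finset.card_powersetCard]
        exact hKdef.symm
      have hpinon : (Fintype.piFinset (fun i : Fin j => (B i).powersetCard s)).Nonempty := by
        rw [← Finset.card_pos, hpicard]; exact hKpos
      have hcount : (Fintype.piFinset (fun i : Fin j => (B i).powersetCard s)).card
          * (s + j * S₀) ≤ U.card := by
        rw [hpicard]
        have hSbig : (2 * (K * (s + j * S₀) + 1) : ℝ) / ε ≤ S.card := by
          have h1 := Nat.le_ceil ((2 * (K * (s + j * S₀) + 1) : ℝ) / ε)
          have h2 : (⌈(2 * (K * (s + j * S₀) + 1) : ℝ) / ε⌉₊ : ℕ) ≤ S.card :=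
            le_trans (le_max_right _ _) hcard
          exact h1.trans (by exact_mod_cast h2)
        have hK1 : (K * (s + j * S₀) + 1 : ℝ) ≤ (ε/2) * S.card := by
          rw [div_le_iff₀ hε] at hSbig
          linarith
        have hK2 : ((K * (s + j * S₀) : ℕ) : ℝ) ≤ (U.card : ℝ) := by push_cast; linarith [hUlow]
        exact_mod_cast hK2
      obtain ⟨y, hy, hyfiber⟩ := Finset.exists_le_card_fiber_of_mul_le_card_of_maps_to
        hmaps hpinon hcount
      have hyspec : ∀ i, y i ⊆ B i ∧ (y i).card = s := by
        intro i
        have := Fintype.mem_piFinset.mp hy i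
        exact Finset.mem_powersetCard.mp this
      have hnewcard : s ≤ ((U.filter fun u => g u = y) \ W).card := by
        have h1 := Finset.le_card_sdiff W (U.filter fun u => g u = y)
        omega
      obtain ⟨Bn, hBnsub, hBncard⟩ := Finset.exists_subset_card_eq hnewcard
      have hBnU : Bn ⊆ U := fun u hu => (Finset.mem_filter.mp (Finset.mem_sdiff.mp (hBnsub hu)).1).1
      have hyadj : ∀ u ∈ Bn, ∀ i, ∀ x ∈ y i, A u x = true := by
        intro u hu i x hx
        have hu' := Finset.mem_sdiff.mp (hBnsub hu)
        have hgu : g u = y := (Finset.mem_filter.mp hu'.1).2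
        have := (hgspec u (hBnU hu) i).1
        rw [hgu] at this
        exact (Finset.mem_filter.mp (this hx)).2
      refine ⟨fun i => if h : (i:ℕ) < j then y ⟨i.1, h⟩ else Bn, ?_, ?_, ?_⟩
      · intro i
        by_cases h : (i:ℕ) < j
        · simpa [h] using ((hyspec ⟨i.1, h⟩).1.trans (hBS _))
        · simpa [h] using (hBnU.trans (filter_subset _ _))
      · intro i
        by_cases h : (i:ℕ) < j
        · simpa [h] using (hyspec ⟨i.1, h⟩).2
        · simpa [h] using hBncard
      · intro i i' hne x hx u hu
        by_cases h : (i:ℕ) < j <;> by_cases h' : (i':ℕ) < j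
        · simp only [dif_pos h] at hx
          simp only [dif_pos h'] at hu
          refine hBcross ⟨i.1, h⟩ ⟨i'.1, h'⟩ ?_ x ((hyspec _).1 hx) u ((hyspec _).1 hu)
          intro hc
          simp only [Fin.mk.injEq] at hc
          exact hne (Fin.ext hc)
        · simp only [dif_pos h] at hx
          simp only [dif_neg h'] at hu
          rw [hsym]
          exact hyadj u hu ⟨i.1, h⟩ x hx
        · simp only [dif_neg h] at hx
          simp only [dif_pos h'] at hu
          exact hyadj x hx ⟨i'.1, h'⟩ u hu
        · exact absurd (Fin.ext (by have := i.isLt; have := i'.isLt; omega)) hne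


open Finset in
theorem cleanlemma {n : ℕ} (A : Fin n → Fin n → Bool) (hsym : ∀ x y, A x y = A y x)
    (hirr : ∀ x, A x x = false) (c X : ℝ) (hc : 0 ≤ c) (hX : 0 < X) :
    ∀ S : Finset (Fin n),
      c * S.card * (S.card + 1) + X < ((∑ v ∈ S, (S.filter fun w => A v w = true).card : ℕ) : ℝ) →
      ∃ S' : Finset (Fin n), S' ⊆ S ∧ X < (S'.card : ℝ)^2 ∧
        ∀ v ∈ S', c * S'.card ≤ ((S'.filter fun w => A v w = true).card : ℝ) := by
  intro S
  induction S using Finset.strongInductionOn with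
  | _ S ih =>
    intro hS
    by_cases hgood : ∀ v ∈ S, c * S.card ≤ ((S.filter fun w => A v w = true).card : ℝ)
    · refine ⟨S, subset_rfl, ?_, hgood⟩
      have hD : ((∑ v ∈ S, (S.filter fun w => A v w = true).card : ℕ) : ℝ) ≤ (S.card : ℝ)^2 := by
        have h1 : (∑ v ∈ S, (S.filter fun w => A v w = true).card : ℕ) ≤ S.card * S.card := by
          apply le_trans (Finset.sum_le_card_nsmul _ _ S.card ?_)
          · simp [smul_eq_mul]
          · exact fun x _ => card_le_card (filter_subset _ _)
        calc ((∑ v ∈ S, (S.filter fun w => A v w = true).card : ℕ) : ℝ)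
            ≤ ((S.card * S.card : ℕ) : ℝ) := by exact_mod_cast h1
          _ = (S.card : ℝ)^2 := by push_cast; ring
      have hcS : (0:ℝ) ≤ c * S.card * (S.card + 1) := by positivity
      linarith
    · push_neg at hgood
      obtain ⟨v, hv, hbad⟩ := hgood
      -- deletion identity
      set dv : ℕ := (S.filter fun w => A v w = true).card with hdv
      have hvnotmem : ∀ (T : Finset (Fin n)), v ∉ T.filter fun w => A v w = true := by
        intro T hmem
        have := (Finset.mem_filter.mp hmem).2
        rw [hirr] at this
        exact Bool.false_ne_true this
      have hfiltererase : (S.erase v).filter (fun w => A v w = true)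
          = S.filter fun w => A v w = true := by
        rw [Finset.filter_erase, Finset.erase_eq_of_notMem (hvnotmem S)]
      have hkey : (∑ u ∈ S, (S.filter fun w => A u w = true).card : ℕ)
          = (∑ u ∈ S.erase v, ((S.erase v).filter fun w => A u w = true).card) + 2 * dv := by
        rw [← Finset.add_sum_erase _ _ hv]
        have hterm : ∀ u ∈ S.erase v, (S.filter fun w => A u w = true).card
            = ((S.erase v).filter fun w => A u w = true).card + (if A u v = true then 1 else 0) := by
          intro u hu
          conv_lhs => rw [← Finset.insert_erase hv]
          rw [Finset.filter_insert]
          by_cases hA : A u v = true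
          · rw [if_pos hA, Finset.card_insert_of_notMem (fun hmem =>
              (Finset.notMem_erase v S) (Finset.mem_of_mem_filter _ hmem)), if_pos hA]
          · rw [if_neg hA, if_neg hA, Nat.add_zero]
        rw [Finset.sum_congr rfl hterm, Finset.sum_add_distrib]
        have hsum2 : (∑ u ∈ S.erase v, if A u v = true then 1 else 0) = dv := by
          rw [← Finset.card_filter]
          have : (S.erase v).filter (fun u => A u v = true)
              = (S.erase v).filter (fun u => A v u = true) := by
            apply Finset.filter_congr
            intro x _
            rw [hsym]
          rw [this, hfiltererase]
        rw [hsum2, hdv]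
        ring
      have hcardpos : 1 ≤ S.card := Finset.card_pos.mpr ⟨v, hv⟩
      have hinv : c * (S.erase v).card * ((S.erase v).card + 1) + X
          < ((∑ u ∈ S.erase v, ((S.erase v).filter fun w => A u w = true).card : ℕ) : ℝ) := by
        have hrw : ((∑ u ∈ S.erase v, ((S.erase v).filter fun w => A u w = true).card : ℕ) : ℝ)
            = ((∑ u ∈ S, (S.filter fun w => A u w = true).card : ℕ) : ℝ) - 2 * dv := by
          rw [hkey]; push_cast; ring
        have hce : ((S.erase v).card : ℝ) = (S.card : ℝ) - 1 := by
          rw [Finset.card_erase_of_mem hv]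
          push_cast [Nat.cast_sub hcardpos]
          ring
        rw [hrw, hce]
        have hdvlt : (dv : ℝ) < c * S.card := hbad
        nlinarith [hS]
      obtain ⟨S', hS'sub, hS'X, hS'deg⟩ := ih (S.erase v) (Finset.erase_ssubset hv) hinv
      exact ⟨S', hS'sub.trans (Finset.erase_subset _ _), hS'X, hS'deg⟩


set_option maxHeartbeats 1600000 in
/-- Universal lemma for entropy-dense templates (Lemma 4.3). -/
theorem universal_lemma (P : ∀ n, Set (SimpleGraph (Fin n))) (hP : GraphHereditary P)
    (r ℓ : ℕ) (hr : 2 ≤ r) (hℓ : 1 ≤ ℓ) (ε : ℝ) (hε : 0 < ε) :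
    ∃ n₀ : ℕ, ∀ n, n₀ ≤ n → ∀ t : Template 2 n, Proper t →
      (∀ c : Colouring 2 n, Realises c t → colouringGraph c ∈ P n) →
      (1 - 1 / (r : ℝ) + ε) * (n.choose 2 : ℝ) ≤ Ent t →
      ∃ v : Fin (r + 1) → Bool,
        ∀ (m : ℕ) (G : SimpleGraph (Fin m)), InHl ℓ v G → G ∈ P m := by
  classical
  obtain ⟨NR, hNR⟩ := ramsey2 ℓ ℓ
  obtain ⟨m₀, hm₀⟩ := multi r (by omega) (ε/2) (by positivity) (r+1) le_rfl NR
  refine ⟨max (⌈(8+8*ε)/ε⌉₊ + 1) (⌈(2*(m₀:ℝ))*(1+1/ε)⌉₊ + 1), fun n hn t ht hPt hEnt => ?_⟩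
  have hrpos : 0 < r := by omega
  have hrR : (0:ℝ) < r := by exact_mod_cast hrpos
  have h1r : (1:ℝ)/r ≤ 1 := by
    rw [div_le_one hrR]
    exact_mod_cast hrpos
  have h1r0 : (0:ℝ) < 1/r := by positivity
  have hn1 : 1 ≤ n := le_trans (le_trans (by omega) (le_max_left _ _)) hn
  have hnR : (0:ℝ) < n := by exact_mod_cast hn1
  -- entropy gives the number of free edges
  set F : ℕ := (Finset.univ.filter fun e : Edge n => (t e).card = 2).card with hFdef
  have hcard2 : ∀ e : Edge n, (t e).card = 1 ∨ (t e).card = 2 := by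
    intro e
    have h1 : 0 < (t e).card := Finset.card_pos.mpr (ht e)
    have h2 : (t e).card ≤ 2 := by
      have := Finset.card_le_univ (t e)
      simpa using this
    omega
  have hEntF : Ent t = (F:ℝ) := by
    unfold Ent
    have hterm : ∀ e ∈ (Finset.univ : Finset (Edge n)),
        Real.logb ((2:ℕ):ℝ) ((t e).card) = if (t e).card = 2 then (1:ℝ) else 0 := by
      intro e _
      rcases hcard2 e with h | h
      · rw [h, if_neg (by omega)]
        norm_num
      · rw [h, if_pos rfl]
        norm_num [Real.logb_self_eq_one]
    rw [Finset.sum_congr rfl hterm, Finset.sum_boole, hFdef]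
  -- the free graph
  set A : Fin n → Fin n → Bool := fun x y =>
    if h : x < y then decide ((t ⟨(x,y),h⟩).card = 2)
    else if h' : y < x then decide ((t ⟨(y,x),h'⟩).card = 2) else false with hAdef
  have hA_eval : ∀ x y (h : x < y), A x y = decide ((t ⟨(x,y),h⟩).card = 2) := by
    intro x y h
    simp only [hAdef]
    rw [dif_pos h]
  have hAsym : ∀ x y, A x y = A y x := by
    intro x y
    rcases lt_trichotomy x y with h | h | h
    · simp only [hAdef]
      rw [dif_pos h, dif_neg (asymm h), dif_pos h]
    · rw [h]
    · simp only [hAdef]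
      rw [dif_neg (asymm h), dif_pos h, dif_pos h]
  have hAirr : ∀ x, A x x = false := by
    intro x
    simp only [hAdef]
    rw [dif_neg (lt_irrefl x), dif_neg (lt_irrefl x)]
  -- sum of degrees equals 2F
  have hdegsum : (∑ v ∈ Finset.univ, ((Finset.univ : Finset (Fin n)).filter
      fun w => A v w = true).card) = 2 * F := by
    have h1 : (∑ v ∈ Finset.univ, ((Finset.univ : Finset (Fin n)).filter
        fun w => A v w = true).card)
        = ((Finset.univ ×ˢ Finset.univ).filter fun p : Fin n × Fin n => A p.1 p.2 = true).card := by
      rw [Finset.card_filter, Finset.sum_product]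
      simp only [Finset.card_filter]
    set Pst := (Finset.univ ×ˢ Finset.univ).filter fun p : Fin n × Fin n => A p.1 p.2 = true
      with hPst
    have hnp : ∀ p ∈ Pst, p.1 ≠ p.2 := by
      intro p hp hpe
      have := (Finset.mem_filter.mp hp).2
      rw [hpe, hAirr] at this
      exact Bool.false_ne_true this
    have hsplit : Pst.card = (Pst.filter fun p => p.1 < p.2).card
        + (Pst.filter fun p => p.2 < p.1).card := by
      rw [← Finset.card_filter_add_card_filter_not
        (p := fun p : Fin n × Fin n => p.1 < p.2)]
      congr 1
      apply congrArg Finset.card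
      apply Finset.filter_congr
      intro p hp
      constructor
      · intro hnlt
        exact (lt_or_gt_of_ne (hnp p hp)).resolve_left hnlt
      · intro hgt
        exact asymm hgt
    have hb1 : F = (Pst.filter fun p => p.1 < p.2).card := by
      apply Finset.card_bij (fun (e : Edge n) (_ : e ∈ Finset.univ.filter
        fun e : Edge n => (t e).card = 2) => e.1)
      · intro e he
        refine Finset.mem_filter.mpr ⟨Finset.mem_filter.mpr
          ⟨Finset.mem_product.mpr ⟨Finset.mem_univ _, Finset.mem_univ _⟩, ?_⟩, e.2⟩
        rw [hA_eval e.1.1 e.1.2 e.2, decide_eq_true_eq]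
        exact (Finset.mem_filter.mp he).2
      · intro e1 h1 e2 h2 heq
        exact Subtype.ext heq
      · intro p hp
        have hp1 := Finset.mem_filter.mp hp
        have hp2 := (Finset.mem_filter.mp hp1.1).2
        refine ⟨⟨(p.1, p.2), hp1.2⟩, ?_, rfl⟩
        refine Finset.mem_filter.mpr ⟨Finset.mem_univ _, ?_⟩
        rw [hA_eval p.1 p.2 hp1.2, decide_eq_true_eq] at hp2
        exact hp2
    have hb2 : F = (Pst.filter fun p => p.2 < p.1).card := by
      apply Finset.card_bij (fun (e : Edge n) (_ : e ∈ Finset.univ.filter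
        fun e : Edge n => (t e).card = 2) => ((e.1.2, e.1.1) : Fin n × Fin n))
      · intro e he
        refine Finset.mem_filter.mpr ⟨Finset.mem_filter.mpr
          ⟨Finset.mem_product.mpr ⟨Finset.mem_univ _, Finset.mem_univ _⟩, ?_⟩, e.2⟩
        show A e.1.2 e.1.1 = true
        rw [hAsym, hA_eval e.1.1 e.1.2 e.2, decide_eq_true_eq]
        exact (Finset.mem_filter.mp he).2
      · intro e1 h1 e2 h2 heq
        have hfst := congrArg Prod.fst heq
        have hsnd := congrArg Prod.snd heq
        simp only at hfst hsnd
        apply Subtype.ext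
        rw [Prod.ext_iff]
        exact ⟨hsnd, hfst⟩
      · intro p hp
        have hp1 := Finset.mem_filter.mp hp
        have hp2 := (Finset.mem_filter.mp hp1.1).2
        refine ⟨⟨(p.2, p.1), hp1.2⟩, ?_, rfl⟩
        refine Finset.mem_filter.mpr ⟨Finset.mem_univ _, ?_⟩
        rw [hAsym, hA_eval p.2 p.1 hp1.2, decide_eq_true_eq] at hp2
        exact hp2
    rw [h1, hsplit, ← hb1, ← hb2]
    ring
  -- initial inequality for the cleaning lemma
  have hFR : (1 - 1/(r:ℝ) + ε) * (n.choose 2 : ℝ) ≤ (F:ℝ) := by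
    rw [← hEntF]
    exact hEnt
  have hchoose2 : ((n.choose 2 : ℕ) : ℝ) * 2 = (n:ℝ) * ((n:ℝ) - 1) := by
    have heven : 2 ∣ n * (n - 1) := by
      have h := Nat.even_mul_succ_self (n - 1)
      have hsucc : n - 1 + 1 = n := by omega
      rw [hsucc] at h
      rw [mul_comm]
      exact h.two_dvd
    have hnat : n.choose 2 * 2 = n * (n - 1) := by
      rw [Nat.choose_two_right]
      exact Nat.div_mul_cancel heven
    have : ((n.choose 2 * 2 : ℕ) : ℝ) = ((n * (n-1) : ℕ) : ℝ) := by exact_mod_cast hnat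
    push_cast [Nat.cast_sub hn1] at this
    linarith
  have hnbig : (8+8*ε)/ε < (n:ℝ) := by
    have h1 := Nat.le_ceil ((8+8*ε)/ε)
    have h2 : (⌈(8+8*ε)/ε⌉₊ + 1 : ℕ) ≤ n := le_trans (le_max_left _ _) hn
    have h3 : ((⌈(8+8*ε)/ε⌉₊ + 1 : ℕ) : ℝ) ≤ (n:ℝ) := by exact_mod_cast h2
    push_cast at h3
    linarith
  have hεn : 8 + 8*ε < ε * (n:ℝ) := by
    rw [div_lt_iff₀ hε] at hnbig
    linarith
  have hεnn : (8+8*ε)*(n:ℝ) < ε * (n:ℝ) * (n:ℝ) := by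
    have := mul_lt_mul_of_pos_right hεn hnR
    linarith
  have hinit : (1 - 1/(r:ℝ) + ε/2) * ((Finset.univ : Finset (Fin n)).card : ℝ)
      * (((Finset.univ : Finset (Fin n)).card : ℝ) + 1) + (ε/4)*(n:ℝ)^2
      < ((∑ v ∈ Finset.univ, ((Finset.univ : Finset (Fin n)).filter
          fun w => A v w = true).card : ℕ) : ℝ) := by
    rw [hdegsum]
    have hcardu : (((Finset.univ : Finset (Fin n)).card : ℕ) : ℝ) = (n:ℝ) := by
      simp
    rw [hcardu]
    have h2F : (1 - 1/(r:ℝ) + ε) * ((n:ℝ) * ((n:ℝ)-1)) ≤ ((2 * F : ℕ) : ℝ) := by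
      push_cast
      calc (1 - 1/(r:ℝ) + ε) * ((n:ℝ) * ((n:ℝ)-1))
          = ((1 - 1/(r:ℝ) + ε) * (n.choose 2 : ℝ)) * 2 := by rw [← hchoose2]; ring
        _ ≤ (F:ℝ) * 2 := by linarith [hFR]
        _ = 2 * (F:ℝ) := by ring
    have hun : (0:ℝ) ≤ (1/(r:ℝ)) * n := by positivity
    nlinarith [h2F, hεnn, hun, hnR, hε, h1r, mul_pos hε hnR]
  -- cleaning
  have hXpos : (0:ℝ) < (ε/4)*(n:ℝ)^2 := mul_pos (by linarith) (pow_pos hnR 2)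
  obtain ⟨S', hS'u, hS'X, hS'deg⟩ := cleanlemma A hAsym hAirr (1 - 1/(r:ℝ) + ε/2)
    ((ε/4)*(n:ℝ)^2) (by linarith [h1r, hε]) hXpos Finset.univ hinit
  -- S' is large
  have hm₀S' : m₀ ≤ S'.card := by
    have hnm : (2*(m₀:ℝ))*(1+1/ε) ≤ (n:ℝ) := by
      have h1 := Nat.le_ceil ((2*(m₀:ℝ))*(1+1/ε))
      have h2 : (⌈(2*(m₀:ℝ))*(1+1/ε)⌉₊ + 1 : ℕ) ≤ n := le_trans (le_max_right _ _) hn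
      have h3 : ((⌈(2*(m₀:ℝ))*(1+1/ε)⌉₊ + 1 : ℕ) : ℝ) ≤ (n:ℝ) := by exact_mod_cast h2
      push_cast at h3
      linarith
    have h1e : (0:ℝ) < 1/ε := by positivity
    have hnn : (0:ℝ) ≤ (2*(m₀:ℝ))*(1+1/ε) := by positivity
    have hsq : ((2*(m₀:ℝ))*(1+1/ε))^2 ≤ (n:ℝ)^2 := by
      exact pow_le_pow_left₀ hnn hnm 2
    have hsc : (ε/4)*(((2*(m₀:ℝ))*(1+1/ε))^2) ≤ (ε/4)*(n:ℝ)^2 :=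
      mul_le_mul_of_nonneg_left hsq (by linarith)
    have hexp : (ε/4)*(((2*(m₀:ℝ))*(1+1/ε))^2) = (m₀:ℝ)^2 * (ε*(1+1/ε)^2) := by ring
    have hcore : ε*(1+1/ε)^2 = ε + 2 + 1/ε := by
      field_simp
      ring
    have hm2X : ((m₀:ℝ))^2 ≤ (ε/4)*(n:ℝ)^2 := by
      rw [hexp, hcore] at hsc
      nlinarith [sq_nonneg (m₀:ℝ), hε, h1e, hsc]
    have : (m₀:ℝ) < (S'.card : ℝ) :=
      lt_of_pow_lt_pow_left₀ 2 (Nat.cast_nonneg _) (lt_of_le_of_lt hm2X hS'X)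
    exact_mod_cast this.le
  obtain ⟨B, hBsub, hBcard, hBcross⟩ := hm₀ n A hAsym hAirr S' hm₀S' hS'deg
  -- Ramsey inside each part
  set al : Fin n → Fin n → Bool := fun x y =>
    if h : x < y then decide ((1 : Fin 2) ∈ t ⟨(x,y),h⟩)
    else if h' : y < x then decide ((1 : Fin 2) ∈ t ⟨(y,x),h'⟩) else true with haldef
  have hal_eval : ∀ x y (h : x < y), al x y = decide ((1 : Fin 2) ∈ t ⟨(x,y),h⟩) := by
    intro x y h
    simp only [haldef]
    rw [dif_pos h]
  have halsym : ∀ x y, al x y = al y x := by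
    intro x y
    rcases lt_trichotomy x y with h | h | h
    · simp only [haldef]
      rw [dif_pos h, dif_neg (asymm h), dif_pos h]
    · rw [h]
    · simp only [haldef]
      rw [dif_neg (asymm h), dif_pos h, dif_pos h]
  have hram : ∀ i : Fin (r+1), ∃ (Ci : Finset (Fin n)) (bi : Bool), Ci ⊆ B i ∧ Ci.card = ℓ ∧
      (∀ x ∈ Ci, ∀ y ∈ Ci, x ≠ y → al x y = bi) := by
    intro i
    obtain ⟨S2, hS2sub, hc⟩ := hNR al halsym (B i) (le_of_eq (hBcard i).symm)
    rcases hc with ⟨h1, h2⟩ | ⟨h1, h2⟩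
    · exact ⟨S2, true, hS2sub, h1, h2⟩
    · exact ⟨S2, false, hS2sub, h1, h2⟩
  choose C bb hCsub hCcard hCmono using hram
  refine ⟨bb, ?_⟩
  intro m G hG
  obtain ⟨f, hpart, hadj⟩ := hG
  have hCdisj : ∀ i i' : Fin (r+1), i ≠ i' → ∀ z, z ∈ C i → z ∈ C i' → False := by
    intro i i' hne z hz hz'
    have := hBcross i i' hne z (hCsub i hz) z (hCsub i' hz')
    rw [hAirr] at this
    exact Bool.false_ne_true this
  -- build the embedding
  have hgex : ∀ i : Fin (r+1), ∃ g : Fin m → Fin n,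
      (∀ x, f x = i → g x ∈ C i) ∧ (∀ x y, f x = i → f y = i → g x = g y → x = y) := by
    intro i
    have hcard_le : Fintype.card {x : Fin m // f x = i} ≤ Fintype.card {z : Fin n // z ∈ C i} := by
      rw [Fintype.card_coe, Fintype.card_subtype]
      calc (Finset.univ.filter fun x => f x = i).card = ({x : Fin m | f x = i}).ncard := by
            rw [Set.ncard_eq_toFinset_card']
            congr 1
            ext x
            simp
        _ ≤ ℓ := hpart i
        _ = (C i).card := (hCcard i).symm
    obtain ⟨E⟩ := Function.Embedding.nonempty_of_card_le hcard_le
    have hCne : (C i).Nonempty := Finset.card_pos.mp (by rw [hCcard i]; omega)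
    obtain ⟨z₀, hz₀⟩ := hCne
    refine ⟨fun x => if h : f x = i then (E ⟨x, h⟩ : {z // z ∈ C i}).1 else z₀, ?_, ?_⟩
    · intro x h
      simp only [dif_pos h]
      exact (E ⟨x, h⟩).2
    · intro x y hx hy hxy
      simp only [dif_pos hx, dif_pos hy] at hxy
      have := E.injective (Subtype.ext hxy)
      exact congrArg Subtype.val this
  choose g hg1 hg2 using hgex
  set φ : Fin m → Fin n := fun x => g (f x) x with hφdef
  have hφC : ∀ x, φ x ∈ C (f x) := fun x => hg1 (f x) x rfl
  have hφinj : Function.Injective φ := by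
    intro x y hxy
    have hfxy : f x = f y := by
      by_contra hne
      exact hCdisj (f x) (f y) hne (φ x) (hφC x) (by rw [hxy]; exact hφC y)
    have hxy' : g (f x) x = g (f x) y := by
      have h0 : φ x = φ y := hxy
      rw [hφdef] at h0
      simp only at h0
      rw [← hfxy] at h0
      exact h0
    exact hg2 (f x) x y rfl hfxy.symm hxy'
  -- partial inverse of φ
  set ψ : Fin n → Option (Fin m) := fun z => if h : ∃ x, φ x = z then some h.choose else none
    with hψdef
  have hψφ : ∀ x, ψ (φ x) = some x := by
    intro x
    simp only [hψdef]
    rw [dif_pos (⟨x, rfl⟩ : ∃ y, φ y = φ x)]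
    congr 1
    exact hφinj (⟨x, rfl⟩ : ∃ y, φ y = φ x).choose_spec
  have hψsome : ∀ z a, ψ z = some a → φ a = z := by
    intro z a h
    simp only [hψdef] at h
    by_cases hex : ∃ x, φ x = z
    · rw [dif_pos hex] at h
      have : hex.choose = a := Option.some.inj h
      rw [← this]
      exact hex.choose_spec
    · rw [dif_neg hex] at h
      exact absurd h (by simp)
  -- the colouring realising t and inducing G
  set co : Colouring 2 n := fun e =>
    (ψ e.1.1).elim ((ht e).choose) (fun a =>
      (ψ e.1.2).elim ((ht e).choose) (fun b =>
        if f a = f b then (if bb (f a) = true then 1 else 0)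
        else (if G.Adj a b then 1 else 0))) with hcodef
  have hco : Realises co t := by
    intro e
    obtain ⟨⟨x, y⟩, hxy⟩ := e
    rcases hx : ψ x with _ | a
    · simp only [hcodef, hx, Option.elim_none]
      exact (ht _).choose_spec
    · rcases hy : ψ y with _ | b
      · simp only [hcodef, hx, hy, Option.elim_none, Option.elim_some]
        exact (ht _).choose_spec
      · have hφa : φ a = x := hψsome x a hx
        have hφb : φ b = y := hψsome y b hy
        simp only [hcodef, hx, hy, Option.elim_some]
        by_cases hfab : f a = f b
        · rw [if_pos hfab]
          have hxC : x ∈ C (f a) := hφa ▸ hφC a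
          have hyC : y ∈ C (f a) := by
            rw [hfab]
            exact hφb ▸ hφC b
          have hne : x ≠ y := ne_of_lt hxy
          have hmono := hCmono (f a) x hxC y hyC hne
          rw [hal_eval x y hxy] at hmono
          by_cases hbbv : bb (f a) = true
          · rw [if_pos hbbv]
            rw [hbbv] at hmono
            exact of_decide_eq_true hmono
          · rw [if_neg hbbv]
            have hb' : bb (f a) = false := by
              revert hbbv
              cases bb (f a) <;> simp
            rw [hb'] at hmono
            have h1not : (1 : Fin 2) ∉ t ⟨(x,y),hxy⟩ := by
              intro hmem
              rw [decide_eq_true hmem] at hmono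
              exact absurd hmono (by decide)
            obtain ⟨z, hz⟩ := ht ⟨(x,y),hxy⟩
            fin_cases z
            · exact hz
            · exact absurd hz h1not
        · rw [if_neg hfab]
          have hxB : x ∈ B (f a) := hCsub (f a) (hφa ▸ hφC a)
          have hyB : y ∈ B (f b) := hCsub (f b) (hφb ▸ hφC b)
          have hfree := hBcross (f a) (f b) hfab x hxB y hyB
          rw [hA_eval x y hxy] at hfree
          have hcard : (t ⟨(x,y),hxy⟩).card = 2 := of_decide_eq_true hfree
          have huniv : t ⟨(x,y),hxy⟩ = Finset.univ := by
            apply Finset.eq_univ_of_card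
            rw [hcard]
            simp
          rw [huniv]
          exact Finset.mem_univ _
  -- the induced graph is G
  have hPc : colouringGraph co ∈ P n := hPt co hco
  have hcomap := hP m n ⟨φ, hφinj⟩ (colouringGraph co) hPc
  have hCGadj : ∀ (u w : Fin n) (h : u < w),
      ((colouringGraph co).Adj u w ↔ co ⟨(u,w),h⟩ = 1) := by
    intro u w h
    unfold colouringGraph
    rw [SimpleGraph.fromRel_adj]
    constructor
    · rintro ⟨hne, ⟨h', hc⟩ | ⟨h', hc⟩⟩
      · exact hc
      · exact absurd h' (asymm h)
    · intro hc
      exact ⟨ne_of_lt h, Or.inl ⟨h, hc⟩⟩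
  have hkey : ∀ a b : Fin m, a ≠ b → ∀ (hab : φ a < φ b),
      (co ⟨(φ a, φ b), hab⟩ = 1 ↔ G.Adj a b) := by
    intro a b hne hab
    simp only [hcodef, hψφ, Option.elim_some]
    by_cases hfab : f a = f b
    · rw [if_pos hfab]
      have hGiff := hadj a b hne hfab
      by_cases hbbv : bb (f a) = true
      · rw [if_pos hbbv]
        simp [hGiff, hbbv]
      · rw [if_neg hbbv]
        constructor
        · intro h01
          exact absurd h01 (by decide)
        · intro hAdj
          exact absurd (hGiff.mp hAdj) hbbv
    · rw [if_neg hfab]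
      by_cases hAdj : G.Adj a b
      · simp [hAdj]
      · simp [hAdj]
  have hEq : (colouringGraph co).comap (⟨φ, hφinj⟩ : Fin m ↪ Fin n) = G := by
    ext x y
    simp only [SimpleGraph.comap_adj, Function.Embedding.coeFn_mk]
    by_cases hxy : x = y
    · subst hxy
      simp
    · have hφne : φ x ≠ φ y := fun h => hxy (hφinj h)
      rcases lt_or_gt_of_ne hφne with hlt | hgt
      · rw [hCGadj (φ x) (φ y) hlt, hkey x y hxy hlt]
      · rw [SimpleGraph.adj_comm, hCGadj (φ y) (φ x) hgt, hkey y x (Ne.symm hxy) hgt,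
          SimpleGraph.adj_comm]
  rw [hEq] at hcomap
  exact hcomap
end

section
/- Extremal total weight for the (3,4)-multigraph problem: Let n ≥ 3 and let w : E(K_n) → ℕ be a multigraph on [n] such that for every three distinct vertices x, y, z, w({x,y}) + w({y,z}) + w({x,z}) ≤ 4. Then the total edge weight satisfies Σ_{e∈E(K_n)} w(e) ≤ ⌊n²/2⌋. -/
/-- The multiplicity that `w` assigns to the (unordered) pair `{x, y}`. -/
def pairW {n : ℕ} (w : Edge n → ℕ) (x y : Fin n) : ℕ :=
  if h : x < y then w ⟨(x, y), h⟩ else if h' : y < x then w ⟨(y, x), h'⟩ else 0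

lemma pairW_symm {n : ℕ} (w : Edge n → ℕ) (x y : Fin n) : pairW w x y = pairW w y x := by
  unfold pairW
  rcases lt_trichotomy x y with h | h | h
  · rw [dif_pos h, dif_neg (asymm h), dif_pos h]
  · subst h; simp
  · rw [dif_neg (asymm h), dif_pos h, dif_pos h]

lemma pairW_diag {n : ℕ} (w : Edge n → ℕ) (x : Fin n) : pairW w x x = 0 := by
  simp [pairW]

lemma pairW_double (n : ℕ) (w : Edge n → ℕ) :
    ∑ x : Fin n, ∑ y : Fin n, pairW w x y = 2 * ∑ e : Edge n, w e := by
  have hsplit : ∑ p : Fin n × Fin n, pairW w p.1 p.2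
      = ∑ p ∈ Finset.univ.filter (fun p : Fin n × Fin n => p.1 < p.2), pairW w p.1 p.2
      + ∑ p ∈ Finset.univ.filter (fun p : Fin n × Fin n => p.2 < p.1), pairW w p.1 p.2 := by
    rw [Finset.sum_filter, Finset.sum_filter, ← Finset.sum_add_distrib]
    apply Finset.sum_congr rfl
    intro p _
    rcases lt_trichotomy p.1 p.2 with h | h | h
    · rw [if_pos h, if_neg (asymm h), add_zero]
    · rw [if_neg (by omega), if_neg (by omega), add_zero]
      have : p.1 = p.2 := h
      rw [this, pairW_diag]
    · rw [if_neg (asymm h), if_pos h, zero_add]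
  have hBA : ∑ p ∈ Finset.univ.filter (fun p : Fin n × Fin n => p.2 < p.1), pairW w p.1 p.2
      = ∑ p ∈ Finset.univ.filter (fun p : Fin n × Fin n => p.1 < p.2), pairW w p.1 p.2 := by
    apply Finset.sum_nbij' (fun p : Fin n × Fin n => p.swap) (fun p : Fin n × Fin n => p.swap)
      <;> simp [pairW_symm]
  have hAe : ∑ p ∈ Finset.univ.filter (fun p : Fin n × Fin n => p.1 < p.2), pairW w p.1 p.2
      = ∑ e : Edge n, w e := by
    rw [Finset.sum_subtype (p := fun p : Fin n × Fin n => p.1 < p.2)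
      (Finset.univ.filter (fun p : Fin n × Fin n => p.1 < p.2))
      (by simp) (fun p : Fin n × Fin n => pairW w p.1 p.2)]
    apply Finset.sum_congr rfl
    intro e _
    have h := e.2
    simp only [pairW, dif_pos h]
  rw [Fintype.sum_prod_type] at hsplit
  rw [hsplit, hBA, hAe]
  ring

lemma key {V : Type*} [DecidableEq V] (f : V → V → ℕ)
    (hsymm : ∀ x y, f x y = f y x) (hdiag : ∀ x, f x x = 0) :
    ∀ k : ℕ, ∀ s : Finset V, s.card = k → 3 ≤ k →
    (∀ x ∈ s, ∀ y ∈ s, ∀ z ∈ s, x ≠ y → y ≠ z → x ≠ z →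
      f x y + f y z + f x z ≤ 4) →
    ∑ x ∈ s, ∑ y ∈ s, f x y ≤ 2 * (k ^ 2 / 2) := by
  intro k
  induction k using Nat.strong_induction_on with
  | _ k IH =>
  intro s hcard hk3 htri
  rcases eq_or_lt_of_le hk3 with h3 | h4
  · -- k = 3
    subst h3
    obtain ⟨a, b, c, hab, hac, hbc, rfl⟩ := Finset.card_eq_three.mp hcard
    have expand : ∀ g : V → ℕ, ∑ x ∈ ({a, b, c} : Finset V), g x = g a + g b + g c := by
      intro g
      rw [Finset.sum_insert (by simp [hab, hac]), Finset.sum_insert (by simp [hbc]),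
        Finset.sum_singleton]
      ring
    have ht := htri a (by simp) b (by simp) c (by simp) hab hbc hac
    rw [expand]
    simp only [expand]
    rw [hsymm b a, hsymm c a, hsymm c b, hdiag a, hdiag b, hdiag c]
    have h8 : 2 * (3 ^ 2 / 2) = 8 := by norm_num
    rw [h8]
    omega
  rcases eq_or_lt_of_le (show 4 ≤ k from h4) with h4 | h5
  · -- k = 4
    subst h4
    obtain ⟨a, ha⟩ := Finset.card_pos.mp (by omega : 0 < s.card)
    have hc3 : (s.erase a).card = 3 := by
      rw [Finset.card_erase_of_mem ha]; omega
    obtain ⟨b, c, d, hbc, hbd, hcd, he⟩ := Finset.card_eq_three.mp hc3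
    have hs : s = insert a ({b, c, d} : Finset V) := by
      rw [← he, Finset.insert_erase ha]
    have hab : a ≠ b := by
      intro h; subst h; have := Finset.notMem_erase a s; rw [he] at this; simp at this
    have hac : a ≠ c := by
      intro h; subst h; have := Finset.notMem_erase a s; rw [he] at this; simp at this
    have had : a ≠ d := by
      intro h; subst h; have := Finset.notMem_erase a s; rw [he] at this; simp at this
    have expand : ∀ g : V → ℕ,
        ∑ x ∈ (insert a ({b, c, d} : Finset V)), g x = g a + g b + g c + g d := by
      intro g
      rw [Finset.sum_insert (by simp [hab, hac, had]), Finset.sum_insert (by simp [hbc, hbd]),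
        Finset.sum_insert (by simp [hcd]), Finset.sum_singleton]
      ring
    have mem : ∀ x : V, x ∈ insert a ({b, c, d} : Finset V) → x ∈ s := by
      intro x hx; rwa [hs]
    have t1 := htri a (by rw [hs]; simp) b (by rw [hs]; simp) c (by rw [hs]; simp) hab hbc hac
    have t2 := htri a (by rw [hs]; simp) b (by rw [hs]; simp) d (by rw [hs]; simp) hab hbd had
    have t3 := htri a (by rw [hs]; simp) c (by rw [hs]; simp) d (by rw [hs]; simp) hac hcd had
    have t4 := htri b (by rw [hs]; simp) c (by rw [hs]; simp) d (by rw [hs]; simp) hbc hcd hbd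
    rw [hs, expand]
    simp only [expand]
    rw [hsymm b a, hsymm c a, hsymm c b, hsymm d a, hsymm d b, hsymm d c,
      hdiag a, hdiag b, hdiag c, hdiag d]
    have h16 : 2 * (4 ^ 2 / 2) = 16 := by norm_num
    rw [h16]
    omega
  · -- k ≥ 5
    by_cases hex : ∃ a ∈ s, ∃ b ∈ s, a ≠ b ∧ 2 ≤ f a b
    · obtain ⟨a, ha, b, hb, hab, hfab⟩ := hex
      set s' := (s.erase a).erase b with hs'def
      have hb' : b ∈ s.erase a := Finset.mem_erase.mpr ⟨Ne.symm hab, hb⟩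
      have hcard' : s'.card = k - 2 := by
        rw [hs'def, Finset.card_erase_of_mem hb', Finset.card_erase_of_mem ha, hcard]
        omega
      have hbs' : b ∉ s' := Finset.notMem_erase _ _
      have has'' : a ∉ insert b s' := by
        simp only [Finset.mem_insert]
        push_neg
        exact ⟨hab, fun h => Finset.notMem_erase a s (Finset.mem_of_mem_erase h)⟩
      have hs : s = insert a (insert b s') := by
        rw [hs'def, Finset.insert_erase hb', Finset.insert_erase ha]
      have hsub : ∀ x ∈ s', x ∈ s := fun x hx =>
        Finset.mem_of_mem_erase (Finset.mem_of_mem_erase hx)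
      have hane : ∀ z ∈ s', a ≠ z := by
        intro z hz h; subst h; exact Finset.notMem_erase a s (Finset.mem_of_mem_erase hz)
      have hbne : ∀ z ∈ s', b ≠ z := by
        intro z hz h; subst h; exact hbs' hz
      -- bound on boundary
      have hz4 : ∀ z ∈ s', f a z + f b z ≤ 4 - f a b := by
        intro z hz
        have := htri a ha b hb z (hsub z hz) hab (hbne z hz) (hane z hz)
        rw [hsymm b z] at this ⊢
        omega
      have hsum : ∑ z ∈ s', (f a z + f b z) ≤ (k - 2) * (4 - f a b) := by
        calc ∑ z ∈ s', (f a z + f b z) ≤ ∑ z ∈ s', (4 - f a b) :=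
              Finset.sum_le_sum hz4
          _ = (k - 2) * (4 - f a b) := by rw [Finset.sum_const, hcard', smul_eq_mul]
      have hm4 : f a b ≤ 4 := by
        obtain ⟨z, hz⟩ := Finset.card_pos.mp (by omega : 0 < s'.card)
        have := htri a ha b hb z (hsub z hz) hab (hbne z hz) (hane z hz)
        omega
      have hIH := IH (k - 2) (by omega) s' hcard' (by omega) (by
        intro x hx y hy z hz; exact htri x (hsub x hx) y (hsub y hy) z (hsub z hz))
      -- decompose the double sum
      have expand : ∀ g : V → ℕ,
          ∑ x ∈ insert a (insert b s'), g x = g a + g b + ∑ x ∈ s', g x := by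
        intro g
        rw [Finset.sum_insert has'', Finset.sum_insert hbs']
        ring
      rw [hs]
      rw [expand]
      simp only [expand]
      rw [hsymm b a, hdiag a, hdiag b]
      have hsplit : ∑ x ∈ s', (f x a + f x b + ∑ y ∈ s', f x y)
          = ∑ x ∈ s', f a x + ∑ x ∈ s', f b x + ∑ x ∈ s', ∑ y ∈ s', f x y := by
        rw [← Finset.sum_add_distrib, ← Finset.sum_add_distrib]
        apply Finset.sum_congr rfl
        intro x hx
        rw [hsymm x a, hsymm x b]
      rw [hsplit]
      have hsum' : ∑ x ∈ s', f a x + ∑ x ∈ s', f b x ≤ (k - 2) * (4 - f a b) := by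
        rw [← Finset.sum_add_distrib]; exact hsum
      -- arithmetic
      obtain ⟨j, rfl⟩ : ∃ j, k = j + 2 := ⟨k - 2, by omega⟩
      have hj : 3 ≤ j := by omega
      simp only [Nat.add_sub_cancel] at hIH hsum' hcard' ⊢
      obtain ⟨p, hp⟩ : ∃ p, j ^ 2 = p := ⟨_, rfl⟩
      have hq : (j + 2) ^ 2 = p + 4 * j + 4 := by rw [← hp]; ring
      rw [hq]
      rw [hp] at hIH
      have h2 : 2 ≤ f a b := hfab
      set m := f a b with hm
      interval_cases m <;> omega
    · -- all multiplicities ≤ 1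
      push_neg at hex
      have hb : ∀ x ∈ s, ∑ y ∈ s, f x y ≤ k - 1 := by
        intro x hx
        have : ∑ y ∈ s, f x y = ∑ y ∈ s.erase x, f x y :=
          (Finset.sum_erase s (hdiag x)).symm
        rw [this]
        calc ∑ y ∈ s.erase x, f x y ≤ ∑ y ∈ s.erase x, 1 := by
              apply Finset.sum_le_sum
              intro y hy
              have hyx : x ≠ y := fun h => (Finset.mem_erase.mp hy).1 h.symm
              have := hex x hx y ((Finset.mem_erase.mp hy).2) hyx
              omega
          _ = k - 1 := by
              rw [Finset.sum_const, Finset.card_erase_of_mem hx, hcard, smul_eq_mul, mul_one]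
      calc ∑ x ∈ s, ∑ y ∈ s, f x y ≤ ∑ x ∈ s, (k - 1) := Finset.sum_le_sum hb
        _ = k * (k - 1) := by rw [Finset.sum_const, hcard, smul_eq_mul]
        _ ≤ 2 * (k ^ 2 / 2) := by
            obtain ⟨t, rfl⟩ : ∃ t, k = t + 1 := ⟨k - 1, by omega⟩
            obtain ⟨p, hp⟩ : ∃ p, t * t = p := ⟨_, rfl⟩
            have e1 : (t + 1) * (t + 1 - 1) = p + t := by
              rw [Nat.add_sub_cancel, ← hp]; ring
            have e2 : (t + 1) ^ 2 = p + 2 * t + 1 := by rw [← hp]; ring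
            rw [e1, e2]
            omega


/-- Extremal total weight for the (3,4)-multigraph problem (Proposition 4.8):
if every triple of vertices supports at most 4 edges counting multiplicity, then the
total edge weight is at most `⌊n²/2⌋`. -/
theorem multigraph_total_weight (n : ℕ) (hn : 3 ≤ n) (w : Edge n → ℕ)
    (hw : ∀ x y z : Fin n, x ≠ y → y ≠ z → x ≠ z →
      pairW w x y + pairW w y z + pairW w x z ≤ 4) :
    ∑ e : Edge n, w e ≤ n ^ 2 / 2 := by
  have hk := key (pairW w) (pairW_symm w) (pairW_diag w) n Finset.univ (by simp) hn
    (by intro x _ y _ z _ hxy hyz hxz; exact hw x y z hxy hyz hxz)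
  rw [pairW_double] at hk
  obtain ⟨p, hp⟩ : ∃ p, n ^ 2 = p := ⟨_, rfl⟩
  rw [hp] at hk ⊢
  omega
end

section
/- Extremal entropy for the (3,4)-multigraph problem: Let P = (P_n) where P_n is the set of multigraphs w : E(K_n) → {0,1,2,3,4} in which every triple of vertices supports at most 4 edges counting multiplicity. Then for all n ≥ 3, ex(n,P) = log₅2 · C(n,2) + log₅(3/2) · ⌊n/2⌋. -/
open Filter

/-- The multiplicity (as a natural number) that the multigraph `w : E(K_n) → {0,…,4}`
assigns to the (unordered) pair `{x, y}`. -/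
def pairV {n : ℕ} (w : Colouring 5 n) (x y : Fin n) : ℕ :=
  if h : x < y then (w ⟨(x, y), h⟩).val else if h' : y < x then (w ⟨(y, x), h'⟩).val else 0

/-- Every triple of vertices supports at most 4 edges counting multiplicity. -/
def Bounded34 {n : ℕ} (w : Colouring 5 n) : Prop :=
  ∀ x y z : Fin n, x ≠ y → y ≠ z → x ≠ z →
    pairV w x y + pairV w y z + pairV w x z ≤ 4


namespace MG
open Finset

def G (W : ℕ → ℕ → ℕ) (i j : ℕ) : ℕ := if i = j then 1 else W i j + 1

lemma grid_split (g : ℕ → ℕ → ℕ) (hdiag : ∀ i, g i i = 1) :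
    ∀ n, (∏ i ∈ range n, ∏ j ∈ range n, g i j)
      = ∏ j ∈ range n, ∏ i ∈ range j, (g i j * g j i)
  | 0 => by simp
  | (n+1) => by
    simp only [Finset.prod_range_succ, Finset.prod_mul_distrib]
    rw [grid_split g hdiag n, hdiag]
    simp only [Finset.prod_mul_distrib]
    ring

lemma grid_sq (W : ℕ → ℕ → ℕ) (hsym : ∀ i j, W i j = W j i) (n : ℕ) :
    (∏ i ∈ range n, ∏ j ∈ range n, G W i j)
      = (∏ j ∈ range n, ∏ i ∈ range j, (W i j + 1))^2 := by
  rw [grid_split (G W) (fun i => if_pos rfl) n]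
  have h : ∀ j ∈ range n, ∀ i ∈ range j,
      G W i j * G W j i = (W i j + 1) * (W i j + 1) := by
    intro j _ i hi
    simp only [Finset.mem_range] at hi
    unfold G
    rw [if_neg (by omega), if_neg (by omega), hsym j i]
  rw [Finset.prod_congr rfl (fun j hj => Finset.prod_congr rfl (h j hj))]
  simp only [Finset.prod_mul_distrib]
  ring

lemma trip3 : ∀ x y z : Fin 5, x.val + y.val + z.val ≤ 4 →
    (x.val+1)*(y.val+1)*(z.val+1) ≤ 12 := by decide

lemma trip4 : ∀ a b c d e f : Fin 5,
    a.val + d.val + b.val ≤ 4 → a.val + e.val + c.val ≤ 4 →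
    b.val + f.val + c.val ≤ 4 → d.val + f.val + e.val ≤ 4 →
    (a.val+1)*(b.val+1)*(c.val+1)*(d.val+1)*(e.val+1)*(f.val+1) ≤ 144 := by decide

lemma trip3' (x y z : ℕ) (hx : x ≤ 4) (hy : y ≤ 4) (hz : z ≤ 4) (h : x + y + z ≤ 4) :
    (x+1)*(y+1)*(z+1) ≤ 12 := by
  simpa using trip3 ⟨x, by omega⟩ ⟨y, by omega⟩ ⟨z, by omega⟩ h

lemma trip4' (a b c d e f : ℕ) (ha : a ≤ 4) (hb : b ≤ 4) (hc : c ≤ 4) (hd : d ≤ 4)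
    (he : e ≤ 4) (hf : f ≤ 4)
    (h1 : a + d + b ≤ 4) (h2 : a + e + c ≤ 4) (h3 : b + f + c ≤ 4) (h4 : d + f + e ≤ 4) :
    (a+1)*(b+1)*(c+1)*(d+1)*(e+1)*(f+1) ≤ 144 := by
  simpa using trip4 ⟨a, by omega⟩ ⟨b, by omega⟩ ⟨c, by omega⟩ ⟨d, by omega⟩ ⟨e, by omega⟩
    ⟨f, by omega⟩ h1 h2 h3 h4

lemma choose_one_step (k : ℕ) : (k+1).choose 2 = k + k.choose 2 := by
  have h : (k+1).choose 2 = k.choose 1 + k.choose 2 := Nat.choose_succ_succ k 1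
  simpa [Nat.choose_one_right] using h

lemma choose_succ_two (n : ℕ) : (n+2).choose 2 = n.choose 2 + (2*n + 1) := by
  rw [show n+2 = (n+1)+1 from rfl, choose_one_step, choose_one_step]
  omega

lemma two_choose_two : ∀ n : ℕ, 2 * n.choose 2 = n * (n - 1)
  | 0 => rfl
  | (k+1) => by
    rw [choose_one_step, Nat.mul_add, two_choose_two k, Nat.add_sub_cancel]
    cases k with
    | zero => rfl
    | succ l => simp only [Nat.add_sub_cancel]; ring

def sk (u v : ℕ) : ℕ → ℕ := fun x => if x < u then x else if x + 1 < v then x + 1 else x + 2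

lemma sk_mono {u v : ℕ} (huv : u < v) {x y : ℕ} (h : x < y) : sk u v x < sk u v y := by
  unfold sk; split_ifs <;> omega

lemma sk_bound {u v n x : ℕ} (huv : u < v) (hvn : v < n) (hx : x < n - 2) : sk u v x < n := by
  unfold sk; split_ifs <;> omega

lemma sk_image {u v n : ℕ} (huv : u < v) (hvn : v < n) :
    (range (n-2)).image (sk u v) = ((range n).erase v).erase u := by
  ext z
  simp only [Finset.mem_image, Finset.mem_erase, Finset.mem_range]
  constructor
  · rintro ⟨x, hx, rfl⟩
    unfold sk; split_ifs <;> omega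
  · rintro ⟨hzu, hzv, hzn⟩
    refine ⟨if z < u then z else if z < v then z - 1 else z - 2, ?_, ?_⟩
    · split_ifs <;> omega
    · unfold sk; split_ifs <;> omega

lemma step (m u v : ℕ) (W : ℕ → ℕ → ℕ)
    (hsym : ∀ i j, W i j = W j i) (hbd : ∀ i j, W i j ≤ 4)
    (htri : ∀ i j k, i < j → j < k → k < m+5 → W i j + W j k + W i k ≤ 4)
    (huv : u < v) (hvn : v < m+5) (ha : 2 ≤ W u v)
    (IH : (∏ i ∈ range (m+3), ∏ j ∈ range (m+3),
            G (fun a b => W (sk u v a) (sk u v b)) i j) * 4 ^ ((m+3)/2)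
        ≤ 4 ^ ((m+3).choose 2) * 9 ^ ((m+3)/2)) :
    (∏ i ∈ range (m+5), ∏ j ∈ range (m+5), G W i j) * 4 ^ ((m+5)/2)
      ≤ 4 ^ ((m+5).choose 2) * 9 ^ ((m+5)/2) := by
  have hne : v ≠ u := by omega
  have hv : v ∈ range (m+5) := by simp only [Finset.mem_range]; omega
  have hu : u ∈ (range (m+5)).erase v := by
    simp only [Finset.mem_erase, Finset.mem_range]; omega
  set s' : Finset ℕ := ((range (m+5)).erase v).erase u with hs'
  have hzs : ∀ z ∈ s', z < m+5 ∧ z ≠ u ∧ z ≠ v := by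
    intro z hz
    rw [hs'] at hz
    simp only [Finset.mem_erase, Finset.mem_range] at hz
    exact ⟨hz.2.2, hz.1, hz.2.1⟩
  have hrow : ∀ F : ℕ → ℕ, (∏ j ∈ range (m+5), F j) = F v * (F u * ∏ j ∈ s', F j) := by
    intro F
    rw [← Finset.mul_prod_erase _ _ hv, ← Finset.mul_prod_erase _ _ hu]
  -- the grid factorisation
  have guu : G W u u = 1 := if_pos rfl
  have gvv : G W v v = 1 := if_pos rfl
  have guv : G W u v = W u v + 1 := if_neg (by omega)
  have gvu : G W v u = W u v + 1 := by
    unfold G; rw [if_neg (by omega), hsym v u]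
  have e1 : ∏ j ∈ s', G W u j = ∏ j ∈ s', (W u j + 1) :=
    Finset.prod_congr rfl (fun j hj => if_neg (fun h => (hzs j hj).2.1 h.symm))
  have e2 : ∏ j ∈ s', G W v j = ∏ j ∈ s', (W v j + 1) :=
    Finset.prod_congr rfl (fun j hj => if_neg (fun h => (hzs j hj).2.2 h.symm))
  have e3 : ∏ i ∈ s', G W i u = ∏ i ∈ s', (W u i + 1) :=
    Finset.prod_congr rfl (fun i hi => by
      unfold G; rw [if_neg (hzs i hi).2.1, hsym])
  have e4 : ∏ i ∈ s', G W i v = ∏ i ∈ s', (W v i + 1) :=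
    Finset.prod_congr rfl (fun i hi => by
      unfold G; rw [if_neg (hzs i hi).2.2, hsym])
  have key : (∏ i ∈ range (m+5), ∏ j ∈ range (m+5), G W i j)
      = (W u v + 1)^2 * (((∏ z ∈ s', (W u z + 1)) * (∏ z ∈ s', (W v z + 1)))^2
          * ∏ i ∈ s', ∏ j ∈ s', G W i j) := by
    rw [hrow (fun i => ∏ j ∈ range (m+5), G W i j)]
    simp only [hrow]
    simp only [Finset.prod_mul_distrib]
    rw [guu, gvv, guv, gvu, e1, e2, e3, e4]
    ring
  rw [key]
  -- reindex the inner grid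
  have hinj : ∀ x ∈ range (m+3), ∀ y ∈ range (m+3), sk u v x = sk u v y → x = y := by
    intro x _ y _ h
    rcases Nat.lt_trichotomy x y with hl | hl | hl
    · exact absurd h (Nat.ne_of_lt (sk_mono huv hl))
    · exact hl
    · exact absurd h.symm (Nat.ne_of_lt (sk_mono huv hl))
  have himg : (range (m+3)).image (sk u v) = s' := by
    rw [hs']
    have := sk_image (n := m+5) huv hvn
    simpa using this
  have hgrid' : (∏ i ∈ s', ∏ j ∈ s', G W i j)
      = ∏ i ∈ range (m+3), ∏ j ∈ range (m+3),
          G (fun a b => W (sk u v a) (sk u v b)) i j := by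
    rw [← himg, Finset.prod_image hinj]
    refine Finset.prod_congr rfl (fun i hi => ?_)
    rw [Finset.prod_image hinj]
    refine Finset.prod_congr rfl (fun j hj => ?_)
    unfold G
    by_cases h : i = j
    · simp [h]
    · rw [if_neg (fun hc => h (hinj i hi j hj hc)), if_neg h]
  rw [hgrid']
  -- cardinality of s'
  have hcard : s'.card = m+3 := by
    rw [hs', Finset.card_erase_of_mem hu, Finset.card_erase_of_mem hv, Finset.card_range]
    omega
  -- per-z triple bound
  have hz4 : ∀ z ∈ s', W u z + W v z + W u v ≤ 4 := by
    intro z hz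
    obtain ⟨hzn, hzu, hzv⟩ := hzs z hz
    rcases Nat.lt_trichotomy z u with h | h | h
    · have h0 := htri z u v h huv hvn
      have h1 := hsym z u; have h2 := hsym z v
      omega
    · exact absurd h hzu
    · rcases Nat.lt_trichotomy z v with h' | h' | h'
      · have h0 := htri u z v h h' hvn
        have h1 := hsym z v
        omega
      · exact absurd h' hzv
      · have h0 := htri u v z huv h' hzn
        omega
  have hprodB : ∀ B : ℕ, (∀ z ∈ s', (W u z + 1) * (W v z + 1) ≤ B) →
      ((∏ z ∈ s', (W u z + 1)) * (∏ z ∈ s', (W v z + 1))) ≤ B^(m+3) := by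
    intro B hB
    rw [← Finset.prod_mul_distrib]
    calc (∏ z ∈ s', (W u z + 1) * (W v z + 1)) ≤ ∏ _z ∈ s', B :=
          Finset.prod_le_prod (fun _ _ => Nat.zero_le _) hB
      _ = B^(m+3) := by rw [Finset.prod_const, hcard]
  -- main cross bound
  have hAC : (W u v + 1) * ((∏ z ∈ s', (W u z + 1)) * (∏ z ∈ s', (W v z + 1)))
      ≤ 3 * 4^(m+3) := by
    have hav : W u v = 2 ∨ W u v = 3 ∨ W u v = 4 := by have := hbd u v; omega
    rcases hav with h2 | h3 | h4
    · have hB := hprodB 4 (fun z hz => by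
        have h4 := hz4 z hz
        have hc : W u z = 0 ∨ W u z = 1 ∨ W u z = 2 := by omega
        rcases hc with h | h | h <;> rw [h] <;> omega)
      have h1 : W u v + 1 = 3 := by omega
      rw [h1]
      exact Nat.mul_le_mul_left 3 hB
    · have hB := hprodB 2 (fun z hz => by
        have h4 := hz4 z hz
        have hc : W u z = 0 ∨ W u z = 1 := by omega
        rcases hc with h | h <;> rw [h] <;> omega)
      have hX : (8:ℕ) ≤ 2^(m+3) := by
        calc (8:ℕ) = 2^3 := by norm_num
          _ ≤ 2^(m+3) := Nat.pow_le_pow_right (by norm_num) (by omega)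
      have h44 : (4:ℕ)^(m+3) = 2^(m+3) * 2^(m+3) := by
        rw [show (4:ℕ) = 2*2 from rfl, Nat.mul_pow]
      have h1 : W u v + 1 = 4 := by omega
      rw [h1, h44]
      have hstep := Nat.mul_le_mul_left 4 hB
      have hend : 4 * 2^(m+3) ≤ 3 * (2^(m+3) * 2^(m+3)) := by nlinarith [hX]
      exact le_trans hstep hend
    · have hB := hprodB 1 (fun z hz => by
        have h4 := hz4 z hz
        have hcu : W u z = 0 := by omega
        have hcv : W v z = 0 := by omega
        rw [hcu, hcv])
      rw [one_pow] at hB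
      have hX : (4:ℕ) ≤ 4^(m+3) := by
        calc (4:ℕ) = 4^1 := by norm_num
          _ ≤ 4^(m+3) := Nat.pow_le_pow_right (by norm_num) (by omega)
      have h1 : W u v + 1 = 5 := by omega
      rw [h1]
      have hstep := Nat.mul_le_mul_left 5 hB
      have hend : 5 * 1 ≤ 3 * 4^(m+3) := by nlinarith [hX]
      exact le_trans hstep hend
  -- final assembly
  have hq : (m+5)/2 = (m+3)/2 + 1 := by omega
  have hch : (m+5).choose 2 = (m+3).choose 2 + (2*(m+3) + 1) := by
    rw [show m+5 = (m+3)+2 from rfl]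
    exact choose_succ_two (m+3)
  calc (W u v + 1)^2 * (((∏ z ∈ s', (W u z + 1)) * (∏ z ∈ s', (W v z + 1)))^2
          * (∏ i ∈ range (m+3), ∏ j ∈ range (m+3),
              G (fun a b => W (sk u v a) (sk u v b)) i j)) * 4^((m+5)/2)
    _ = ((∏ i ∈ range (m+3), ∏ j ∈ range (m+3),
            G (fun a b => W (sk u v a) (sk u v b)) i j) * 4^((m+3)/2))
        * (((W u v + 1) * ((∏ z ∈ s', (W u z + 1)) * (∏ z ∈ s', (W v z + 1))))^2 * 4) := by
        rw [hq, pow_succ]; ring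
    _ ≤ (4^((m+3).choose 2) * 9^((m+3)/2)) * ((3 * 4^(m+3))^2 * 4) :=
        Nat.mul_le_mul IH (Nat.mul_le_mul_right 4 (Nat.pow_le_pow_left hAC 2))
    _ = 4^((m+5).choose 2) * 9^((m+5)/2) := by
        rw [hch, hq]
        ring

set_option maxHeartbeats 1000000 in
lemma core : ∀ (n : ℕ), ∀ (W : ℕ → ℕ → ℕ),
    (∀ i j, W i j = W j i) → (∀ i j, W i j ≤ 4) →
    (∀ i j k, i < j → j < k → k < n → W i j + W j k + W i k ≤ 4) →
    n ≠ 2 →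
    (∏ i ∈ range n, ∏ j ∈ range n, G W i j) * 4 ^ (n / 2)
      ≤ 4 ^ (n.choose 2) * 9 ^ (n / 2) := by
  intro n
  induction n using Nat.strong_induction_on with
  | _ n IH =>
  intro W hsym hbd htri hn2
  match n, hn2, htri, IH with
  | 0, _, htri, IH => simp
  | 1, _, htri, IH => simp [G]
  | 2, h, _, _ => exact absurd rfl h
  | 3, _, htri, IH =>
      have h012 := htri 0 1 2 (by omega) (by omega) (by omega)
      have hP := trip3' (W 0 1) (W 1 2) (W 0 2) (hbd _ _) (hbd _ _) (hbd _ _) (by omega)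
      rw [grid_sq W hsym 3]
      simp only [Finset.prod_range_succ, Finset.prod_range_zero, Finset.prod_range_one, one_mul]
      norm_num
      have hT : (W 0 1 + 1) * ((W 0 2 + 1) * (W 1 2 + 1)) ≤ 12 := by
        have he : (W 0 1 + 1) * ((W 0 2 + 1) * (W 1 2 + 1))
            = (W 0 1 + 1) * (W 1 2 + 1) * (W 0 2 + 1) := by ring
        rw [he]; exact hP
      calc ((W 0 1 + 1) * ((W 0 2 + 1) * (W 1 2 + 1))) ^ 2 * 4
        _ ≤ 12 ^ 2 * 4 := Nat.mul_le_mul (Nat.pow_le_pow_left hT 2) (le_refl 4)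
        _ ≤ 576 := by norm_num
  | 4, _, htri, IH =>
      have h1 := htri 0 1 2 (by omega) (by omega) (by omega)
      have h2 := htri 0 1 3 (by omega) (by omega) (by omega)
      have h3 := htri 0 2 3 (by omega) (by omega) (by omega)
      have h4 := htri 1 2 3 (by omega) (by omega) (by omega)
      have hP := trip4' (W 0 1) (W 0 2) (W 0 3) (W 1 2) (W 1 3) (W 2 3)
        (hbd _ _) (hbd _ _) (hbd _ _) (hbd _ _) (hbd _ _) (hbd _ _)
        (by omega) (by omega) (by omega) (by omega)
      rw [grid_sq W hsym 4]
      simp only [Finset.prod_range_succ, Finset.prod_range_zero, Finset.prod_range_one, one_mul]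
      norm_num [Nat.choose]
      have hT : (W 0 1 + 1) * ((W 0 2 + 1) * (W 1 2 + 1)) * ((W 0 3 + 1) * (W 1 3 + 1) * (W 2 3 + 1)) ≤ 144 := by
        have he : (W 0 1 + 1) * ((W 0 2 + 1) * (W 1 2 + 1)) * ((W 0 3 + 1) * (W 1 3 + 1) * (W 2 3 + 1))
            = (W 0 1 + 1) * (W 0 2 + 1) * (W 0 3 + 1) * (W 1 2 + 1) * (W 1 3 + 1) * (W 2 3 + 1) := by ring
        rw [he]; exact hP
      calc ((W 0 1 + 1) * ((W 0 2 + 1) * (W 1 2 + 1)) * ((W 0 3 + 1) * (W 1 3 + 1) * (W 2 3 + 1))) ^ 2 * 16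
        _ ≤ 144 ^ 2 * 16 := Nat.mul_le_mul (Nat.pow_le_pow_left hT 2) (le_refl 16)
        _ ≤ 4 ^ 6 * 81 := by norm_num
  | (m+5), _, htri, IH =>
      by_cases hH : ∃ u v, u < v ∧ v < m+5 ∧ 2 ≤ W u v
      · obtain ⟨u, v, huv, hvn, ha⟩ := hH
        refine step m u v W hsym hbd htri huv hvn ha ?_
        refine IH (m+3) (by omega) _ (fun i j => hsym _ _) (fun i j => hbd _ _) ?_ (by omega)
        intro i j k hij hjk hk
        exact htri _ _ _ (sk_mono huv hij) (sk_mono huv hjk)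
          (sk_bound (n := m+5) huv hvn (by omega))
      · push_neg at hH
        have hle : (∏ i ∈ range (m+5), ∏ j ∈ range (m+5), G W i j)
            ≤ ∏ i ∈ range (m+5), ∏ j ∈ range (m+5), (if i = j then 1 else 2) := by
          refine Finset.prod_le_prod (fun _ _ => Nat.zero_le _) (fun i hi => ?_)
          refine Finset.prod_le_prod (fun _ _ => Nat.zero_le _) (fun j hj => ?_)
          simp only [Finset.mem_range] at hi hj
          unfold G
          by_cases h : i = j
          · simp [h]
          · rw [if_neg h, if_neg h]
            rcases Nat.lt_or_ge i j with hij | hij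
            · have := hH i j hij hj; omega
            · have h2 : j < i := by omega
              have := hH j i h2 hi
              have hs := hsym i j
              omega
        have hconst : (∏ i ∈ range (m+5), ∏ j ∈ range (m+5),
            (if i = j then (1:ℕ) else 2)) = 4^((m+5).choose 2) := by
          have hrow : ∀ i ∈ range (m+5),
              (∏ j ∈ range (m+5), (if i = j then (1:ℕ) else 2)) = 2^(m+4) := by
            intro i hi
            rw [← Finset.mul_prod_erase _ _ hi, if_pos rfl, one_mul]
            rw [Finset.prod_congr rfl (fun j hj => if_neg (Finset.ne_of_mem_erase hj).symm),
              Finset.prod_const, Finset.card_erase_of_mem hi, Finset.card_range]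
            norm_num
          rw [Finset.prod_congr rfl hrow, Finset.prod_const, Finset.card_range, ← pow_mul]
          have h2c := two_choose_two (m+5)
          have hsub : (m+5) - 1 = m+4 := by omega
          rw [hsub] at h2c
          have hexp : (m+4)*(m+5) = 2 * ((m+5).choose 2) := by
            have hcomm : (m+5)*(m+4) = (m+4)*(m+5) := Nat.mul_comm _ _
            omega
          rw [hexp, pow_mul]
          norm_num
        calc (∏ i ∈ range (m+5), ∏ j ∈ range (m+5), G W i j) * 4^((m+5)/2)
          _ ≤ 4^((m+5).choose 2) * 4^((m+5)/2) :=
              Nat.mul_le_mul_right _ (le_trans hle (le_of_eq hconst))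
          _ ≤ 4^((m+5).choose 2) * 9^((m+5)/2) :=
              Nat.mul_le_mul_left _ (Nat.pow_le_pow_left (by norm_num) _)

end MG

namespace MG
open Finset

lemma edge_sum {M : Type*} [AddCommMonoid M] {n : ℕ} (F : Edge n → M) (g : ℕ → ℕ → M)
    (h : ∀ (i j : ℕ) (hi : i < n) (hj : j < n) (hij : (⟨i, hi⟩ : Fin n) < ⟨j, hj⟩),
      F ⟨(⟨i, hi⟩, ⟨j, hj⟩), hij⟩ = g i j) :
    ∑ e : Edge n, F e = ∑ j ∈ Finset.range n, ∑ i ∈ Finset.range j, g i j := by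
  rw [Finset.sum_sigma']
  have hmem : ∀ p : (_ : ℕ) × ℕ, p ∈ (Finset.range n).sigma (fun j => Finset.range j) →
      p.2 < n ∧ p.1 < n ∧ p.2 < p.1 := by
    intro p hp
    simp only [Finset.mem_sigma, Finset.mem_range] at hp
    omega
  refine Finset.sum_bij'
    (fun (e : Edge n) (_ : e ∈ Finset.univ) => (⟨e.1.2.val, e.1.1.val⟩ : (_ : ℕ) × ℕ))
    (fun p hp => ⟨(⟨p.2, (hmem p hp).1⟩, ⟨p.1, (hmem p hp).2.1⟩),
        by exact (hmem p hp).2.2⟩) ?_ ?_ ?_ ?_ ?_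
  · intro e _
    simp only [Finset.mem_sigma, Finset.mem_range]
    exact ⟨e.1.2.isLt, e.2⟩
  · intro p hp
    exact Finset.mem_univ _
  · intro e _
    rfl
  · intro p hp
    rfl
  · intro e _
    exact h e.1.1.val e.1.2.val e.1.1.isLt e.1.2.isLt e.2

lemma edge_prod {n : ℕ} (F : Edge n → ℕ) (g : ℕ → ℕ → ℕ)
    (h : ∀ (i j : ℕ) (hi : i < n) (hj : j < n) (hij : (⟨i, hi⟩ : Fin n) < ⟨j, hj⟩),
      F ⟨(⟨i, hi⟩, ⟨j, hj⟩), hij⟩ = g i j) :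
    ∏ e : Edge n, F e = ∏ j ∈ Finset.range n, ∏ i ∈ Finset.range j, g i j := by
  rw [Finset.prod_sigma']
  have hmem : ∀ p : (_ : ℕ) × ℕ, p ∈ (Finset.range n).sigma (fun j => Finset.range j) →
      p.2 < n ∧ p.1 < n ∧ p.2 < p.1 := by
    intro p hp
    simp only [Finset.mem_sigma, Finset.mem_range] at hp
    omega
  refine Finset.prod_bij'
    (fun (e : Edge n) (_ : e ∈ Finset.univ) => (⟨e.1.2.val, e.1.1.val⟩ : (_ : ℕ) × ℕ))
    (fun p hp => ⟨(⟨p.2, (hmem p hp).1⟩, ⟨p.1, (hmem p hp).2.1⟩),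
        by exact (hmem p hp).2.2⟩) ?_ ?_ ?_ ?_ ?_
  · intro e _
    simp only [Finset.mem_sigma, Finset.mem_range]
    exact ⟨e.1.2.isLt, e.2⟩
  · intro p hp
    exact Finset.mem_univ _
  · intro e _
    rfl
  · intro p hp
    rfl
  · intro e _
    exact h e.1.1.val e.1.2.val e.1.1.isLt e.1.2.isLt e.2

lemma sum_id : ∀ n : ℕ, ∑ i ∈ Finset.range n, i = n.choose 2
  | 0 => rfl
  | (n+1) => by rw [Finset.sum_range_succ, sum_id n, choose_one_step]; omega

lemma odd_count : ∀ n : ℕ, ((Finset.range n).filter (fun j => j % 2 = 1)).card = n / 2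
  | 0 => rfl
  | (n+1) => by
    rw [Finset.range_add_one, Finset.filter_insert]
    by_cases h : n % 2 = 1
    · rw [if_pos h, Finset.card_insert_of_notMem (by simp), odd_count n]
      omega
    · rw [if_neg h, odd_count n]
      omega

/-! ### the symmetric weight function of a colouring -/

def natW {n : ℕ} (w : Colouring 5 n) : ℕ → ℕ → ℕ := fun i j =>
  if h : i < n ∧ j < n then pairV w ⟨i, h.1⟩ ⟨j, h.2⟩ else 0

lemma pairV_symm {n : ℕ} (w : Colouring 5 n) (x y : Fin n) : pairV w x y = pairV w y x := by
  unfold pairV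
  rcases lt_trichotomy x y with h | h | h
  · rw [dif_pos h, dif_neg (not_lt.mpr (le_of_lt h)), dif_pos h]
  · subst h; rw [dif_neg (lt_irrefl x)]
  · rw [dif_neg (not_lt.mpr (le_of_lt h)), dif_pos h, dif_pos h]

lemma pairV_le {n : ℕ} (w : Colouring 5 n) (x y : Fin n) : pairV w x y ≤ 4 := by
  unfold pairV
  split_ifs
  · exact Nat.le_of_lt_succ (Fin.is_lt _)
  · exact Nat.le_of_lt_succ (Fin.is_lt _)
  · exact Nat.zero_le _

lemma natW_symm {n : ℕ} (w : Colouring 5 n) : ∀ i j, natW w i j = natW w j i := by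
  intro i j
  unfold natW
  by_cases h : i < n ∧ j < n
  · rw [dif_pos h, dif_pos (And.intro h.2 h.1), pairV_symm]
  · rw [dif_neg h, dif_neg (fun hc => h ⟨hc.2, hc.1⟩)]

lemma natW_bd {n : ℕ} (w : Colouring 5 n) : ∀ i j, natW w i j ≤ 4 := by
  intro i j
  unfold natW
  split_ifs
  · exact pairV_le w _ _
  · exact Nat.zero_le _

lemma natW_tri {n : ℕ} (w : Colouring 5 n) (hw : Bounded34 w) :
    ∀ i j k, i < j → j < k → k < n → natW w i j + natW w j k + natW w i k ≤ 4 := by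
  intro i j k hij hjk hkn
  have hi : i < n := by omega
  have hj : j < n := by omega
  unfold natW
  rw [dif_pos (And.intro hi hj), dif_pos (And.intro hj hkn), dif_pos (And.intro hi hkn)]
  exact hw ⟨i, hi⟩ ⟨j, hj⟩ ⟨k, hkn⟩ (Fin.ne_of_val_ne (show i ≠ j by omega))
    (Fin.ne_of_val_ne (show j ≠ k by omega)) (Fin.ne_of_val_ne (show i ≠ k by omega))

lemma prod_edge_eq {n : ℕ} (w : Colouring 5 n) :
    (∏ j ∈ Finset.range n, ∏ i ∈ Finset.range j, (natW w i j + 1))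
      = ∏ e : Edge n, ((w e).val + 1) := by
  refine (edge_prod (fun e => (w e).val + 1) (fun i j => natW w i j + 1) ?_).symm
  intro i j hi hj hij
  show (w ⟨(⟨i, hi⟩, ⟨j, hj⟩), hij⟩).val + 1 = natW w i j + 1
  congr 1
  unfold natW
  rw [dif_pos (And.intro hi hj)]
  unfold pairV
  rw [dif_pos hij]

lemma prod_bound {n : ℕ} (hn : n ≠ 2) (w : Colouring 5 n) (hw : Bounded34 w) :
    (∏ e : Edge n, ((w e).val + 1)) * 2^(n/2) ≤ 2^(n.choose 2) * 3^(n/2) := by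
  have hcore := core n (natW w) (natW_symm w) (natW_bd w) (natW_tri w hw) hn
  rw [grid_sq _ (natW_symm w), prod_edge_eq w] at hcore
  refine (Nat.pow_le_pow_iff_left (n := 2) (by norm_num)).mp ?_
  calc ((∏ e : Edge n, ((w e).val + 1)) * 2^(n/2))^2
    _ = (∏ e : Edge n, ((w e).val + 1))^2 * 4^(n/2) := by
        rw [mul_pow, ← pow_mul, mul_comm (n/2) 2, pow_mul]
        norm_num
    _ ≤ 4^(n.choose 2) * 9^(n/2) := hcore
    _ = (2^(n.choose 2) * 3^(n/2))^2 := by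
        rw [mul_pow, ← pow_mul, ← pow_mul, mul_comm (n.choose 2) 2, mul_comm (n/2) 2,
          pow_mul, pow_mul]
        norm_num

/-! ### upper bound -/

lemma ent_upper {n : ℕ} (hn : 3 ≤ n) (t : Template 5 n) (hp : Proper t)
    (hr : ∀ c, Realises c t → Bounded34 c) :
    Ent t ≤ Real.logb 5 2 * (n.choose 2 : ℝ) + Real.logb 5 (3/2) * ((n/2 : ℕ) : ℝ) := by
  classical
  set c : Colouring 5 n := fun e => (t e).max' (hp e) with hc
  have hreal : Realises c t := fun e => (t e).max'_mem (hp e)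
  have hb34 : Bounded34 c := hr c hreal
  have hPle := prod_bound (by omega) c hb34
  set P : ℕ := ∏ e : Edge n, ((c e).val + 1) with hP
  have hPpos : 0 < P := Finset.prod_pos (fun e _ => Nat.succ_pos _)
  have hcardle : ∀ e : Edge n, (t e).card ≤ (c e).val + 1 := by
    intro e
    have hsub : t e ⊆ Finset.Iic (c e) := fun x hx => Finset.mem_Iic.mpr ((t e).le_max' x hx)
    calc (t e).card ≤ (Finset.Iic (c e)).card := Finset.card_le_card hsub
      _ = (c e).val + 1 := Fin.card_Iic (c e)
  have hent1 : Ent t ≤ ∑ e : Edge n, Real.logb 5 (((c e).val + 1 : ℕ) : ℝ) := by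
    unfold Ent
    simp only [Nat.cast_ofNat]
    apply Finset.sum_le_sum
    intro e _
    apply Real.logb_le_logb_of_le (by norm_num)
    · exact_mod_cast Nat.cast_pos.mpr (Finset.card_pos.mpr (hp e))
    · exact_mod_cast hcardle e
  have hsum : (∑ e : Edge n, Real.logb 5 (((c e).val + 1 : ℕ) : ℝ)) = Real.logb 5 (P : ℝ) := by
    rw [hP, Nat.cast_prod]
    unfold Real.logb
    rw [← Finset.sum_div]
    congr 1
    rw [Real.log_prod]
    intro e _
    exact Nat.cast_ne_zero.mpr (by omega)
  have h2 : (P : ℝ) ≤ 2^(n.choose 2) * 3^(n/2) / 2^(n/2) := by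
    rw [le_div_iff₀ (by positivity)]
    exact_mod_cast hPle
  have h3 : Real.logb 5 (P : ℝ) ≤ Real.logb 5 ((2:ℝ)^(n.choose 2) * 3^(n/2) / 2^(n/2)) := by
    apply Real.logb_le_logb_of_le (by norm_num) _ h2
    exact_mod_cast Nat.cast_pos.mpr hPpos
  have h4 : Real.logb 5 ((2:ℝ)^(n.choose 2) * 3^(n/2) / 2^(n/2))
      = Real.logb 5 2 * (n.choose 2 : ℝ) + Real.logb 5 (3/2) * ((n/2 : ℕ) : ℝ) := by
    rw [Real.logb_div (by positivity) (by positivity),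
      Real.logb_mul (by positivity) (by positivity),
      Real.logb_pow, Real.logb_pow, Real.logb_pow,
      Real.logb_div (by norm_num) (by norm_num)]
    ring
  calc Ent t ≤ ∑ e : Edge n, Real.logb 5 (((c e).val + 1 : ℕ) : ℝ) := hent1
    _ = Real.logb 5 (P : ℝ) := hsum
    _ ≤ Real.logb 5 ((2:ℝ)^(n.choose 2) * 3^(n/2) / 2^(n/2)) := h3
    _ = _ := h4

/-! ### lower bound construction -/

def t0 (n : ℕ) : Template 5 n := fun e =>
  if e.1.2.val = e.1.1.val + 1 ∧ e.1.1.val % 2 = 0 then ({0,1,2} : Finset (Fin 5))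
  else ({0,1} : Finset (Fin 5))

lemma t0_proper (n : ℕ) : Proper (t0 n) := by
  intro e
  unfold t0
  split_ifs <;> exact Finset.insert_nonempty _ _

def matchedP {n : ℕ} (x y : Fin n) : Prop :=
  (y.val = x.val + 1 ∧ x.val % 2 = 0) ∨ (x.val = y.val + 1 ∧ y.val % 2 = 0)

lemma matchedP_uniq {n : ℕ} {x y z : Fin n} (h1 : matchedP x y) (h2 : matchedP x z) : y = z := by
  apply Fin.ext
  rcases h1 with ⟨a, b⟩ | ⟨a, b⟩ <;> rcases h2 with ⟨c, d⟩ | ⟨c, d⟩ <;> omega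

lemma matchedP_comm {n : ℕ} {x y : Fin n} (h : matchedP x y) : matchedP y x :=
  h.elim Or.inr Or.inl

lemma mem012 : ∀ d : Fin 5, d ∈ ({0,1,2} : Finset (Fin 5)) → d.val ≤ 2 := by decide

lemma mem01 : ∀ d : Fin 5, d ∈ ({0,1} : Finset (Fin 5)) → d.val ≤ 1 := by decide

lemma pv_le2 {n : ℕ} (c : Colouring 5 n) (hc : Realises c (t0 n)) (x y : Fin n) :
    pairV c x y ≤ 2 := by
  unfold pairV
  split_ifs with h1 h2
  · have hm := hc ⟨(x, y), h1⟩
    unfold t0 at hm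
    split_ifs at hm
    · exact mem012 _ hm
    · exact le_trans (mem01 _ hm) (by omega)
  · have hm := hc ⟨(y, x), h2⟩
    unfold t0 at hm
    split_ifs at hm
    · exact mem012 _ hm
    · exact le_trans (mem01 _ hm) (by omega)
  · exact Nat.zero_le _

lemma pv_le1 {n : ℕ} (c : Colouring 5 n) (hc : Realises c (t0 n)) (x y : Fin n)
    (h : ¬ matchedP x y) : pairV c x y ≤ 1 := by
  unfold pairV
  split_ifs with h1 h2
  · have hm := hc ⟨(x, y), h1⟩
    unfold t0 at hm
    rw [if_neg (fun hcc => h (Or.inl hcc))] at hm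
    exact mem01 _ hm
  · have hm := hc ⟨(y, x), h2⟩
    unfold t0 at hm
    rw [if_neg (fun hcc => h (Or.inr hcc))] at hm
    exact mem01 _ hm
  · exact Nat.zero_le _

lemma t0_sound (n : ℕ) : ∀ c, Realises c (t0 n) → Bounded34 c := by
  intro c hc x y z hxy hyz hxz
  by_cases m1 : matchedP x y
  · have m2 : ¬ matchedP y z := fun m => hxz (matchedP_uniq (matchedP_comm m1) m)
    have m3 : ¬ matchedP x z := fun m => hyz (matchedP_uniq m1 m)
    have a1 := pv_le2 c hc x y
    have a2 := pv_le1 c hc y z m2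
    have a3 := pv_le1 c hc x z m3
    omega
  · by_cases m2 : matchedP y z
    · have m3 : ¬ matchedP x z := fun m => hxy (matchedP_uniq (matchedP_comm m) (matchedP_comm m2))
      have a1 := pv_le1 c hc x y m1
      have a2 := pv_le2 c hc y z
      have a3 := pv_le1 c hc x z m3
      omega
    · have a1 := pv_le1 c hc x y m1
      have a2 := pv_le1 c hc y z m2
      have a3 := pv_le2 c hc x z
      omega

lemma ent_t0 (n : ℕ) : Ent (t0 n) =
    Real.logb 5 2 * (n.choose 2 : ℝ) + Real.logb 5 (3/2) * ((n/2 : ℕ) : ℝ) := by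
  unfold Ent
  simp only [Nat.cast_ofNat]
  rw [edge_sum (fun e => Real.logb 5 (((t0 n e).card : ℕ) : ℝ))
      (fun i j => if j = i + 1 ∧ i % 2 = 0 then Real.logb 5 3 else Real.logb 5 2) ?_]
  · have hinner : ∀ j : ℕ, (∑ i ∈ Finset.range j,
        if j = i + 1 ∧ i % 2 = 0 then Real.logb 5 3 else Real.logb 5 2)
        = (j : ℝ) * Real.logb 5 2
          + (if j % 2 = 1 then Real.logb 5 3 - Real.logb 5 2 else 0) := by
      intro j
      by_cases hj : j % 2 = 1
      · have hj1 : 1 ≤ j := by omega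
        have hmem : j - 1 ∈ Finset.range j := by
          simp only [Finset.mem_range]; omega
        rw [← Finset.add_sum_erase _ _ hmem, if_pos (And.intro (by omega) (by omega))]
        have hrest : (∑ i ∈ (Finset.range j).erase (j-1),
            if j = i + 1 ∧ i % 2 = 0 then Real.logb 5 3 else Real.logb 5 2)
            = ((j - 1 : ℕ) : ℝ) * Real.logb 5 2 := by
          rw [Finset.sum_congr rfl (fun i hi =>
              if_neg (fun hcc => (Finset.ne_of_mem_erase hi) (by omega))),
            Finset.sum_const, Finset.card_erase_of_mem hmem, Finset.card_range,
            nsmul_eq_mul]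
        rw [hrest, if_pos hj, Nat.cast_sub hj1, Nat.cast_one]
        ring
      · rw [Finset.sum_congr rfl (fun i hi => if_neg (fun hcc => hj (by omega))),
          Finset.sum_const, Finset.card_range, nsmul_eq_mul, if_neg hj]
        ring
    rw [Finset.sum_congr rfl (fun j _ => hinner j), Finset.sum_add_distrib]
    have h1 : (∑ j ∈ Finset.range n, (j:ℝ) * Real.logb 5 2)
        = (n.choose 2 : ℝ) * Real.logb 5 2 := by
      rw [← Finset.sum_mul]
      congr 1
      rw [← Nat.cast_sum]
      exact congrArg _ (sum_id n)
    have h2 : (∑ j ∈ Finset.range n,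
        if j % 2 = 1 then Real.logb 5 3 - Real.logb 5 2 else 0)
        = ((n/2 : ℕ) : ℝ) * (Real.logb 5 3 - Real.logb 5 2) := by
      rw [← Finset.sum_filter, Finset.sum_const, odd_count n, nsmul_eq_mul]
    rw [h1, h2, Real.logb_div (by norm_num) (by norm_num)]
    ring
  · intro i j hi hj hij
    show Real.logb 5 (((t0 n ⟨(⟨i, hi⟩, ⟨j, hj⟩), hij⟩).card : ℕ) : ℝ)
        = if j = i + 1 ∧ i % 2 = 0 then Real.logb 5 3 else Real.logb 5 2
    unfold t0
    rw [apply_ite (fun s : Finset (Fin 5) => Real.logb 5 ((s.card : ℕ) : ℝ)),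
      show ({0,1,2} : Finset (Fin 5)).card = 3 by decide,
      show ({0,1} : Finset (Fin 5)).card = 2 by decide]
    norm_num

end MG

/-- Extremal entropy for the (3,4)-multigraph problem (Theorem 4.11). -/
theorem multigraph_extremal_entropy (n : ℕ) (hn : 3 ≤ n) :
    exEnt {w : Colouring 5 n | Bounded34 w} =
      Real.logb 5 2 * (n.choose 2 : ℝ) + Real.logb 5 (3 / 2) * ((n / 2 : ℕ) : ℝ) := by
  apply IsGreatest.csSup_eq
  constructor
  · exact ⟨MG.t0 n, MG.t0_proper n, fun c hc => MG.t0_sound n c hc, MG.ent_t0 n⟩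
  · rintro x ⟨t, hp, hr, rfl⟩
    exact MG.ent_upper hn t hp hr
end
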